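/- arXiv:0908.1559 — 3 statements merged into one kernel-verified Lean document; each statement's English description precedes it below -/
import Mathlib

section
/- Let d ≥ 1 be an integer, α ∈ (0,2) and p > α. There exist constants R_* ∈ (0,1) and C > 0, depending only on p, d and α, such that for every x ∈ ℝ^d with x_1 ∈ (0, R_*], the principal-value limit Δ̂_d^{α/2} w_p(x) := lim_{ε→0+} ∫_{{y ∈ ℝ^d : ε < |y−x| < 1}} (w_p(y) − w_p(x)) · 𝒜(d,α) · |x−y|^{−d−α} dy exists and satisfies |Δ̂_d^{α/2} w_p(x)| ≤ C. -/
open MeasureTheory Filter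

/-- The constant `𝒜(d,α) = α·2^{α−1}·π^{−d/2}·Γ((d+α)/2)/Γ(1−α/2)`. -/
noncomputable def frakA (d : ℕ) (α : ℝ) : ℝ :=
  α * (2 : ℝ) ^ (α - 1) * Real.pi ^ (-(d : ℝ) / 2) *
    Real.Gamma (((d : ℝ) + α) / 2) / Real.Gamma (1 - α / 2)

/-- The function `w_p(x) = (max(x_1,0))^p` on `ℝ^d`. -/
noncomputable def wp (d : ℕ) (hd : 0 < d) (p : ℝ) (x : EuclideanSpace ℝ (Fin d)) : ℝ :=
  max (x ⟨0, hd⟩) 0 ^ p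

/-- `truncFracLapPV d α lam u x L` says that the principal-value limit defining the
`lam`-truncated fractional Laplacian `Δ̂_{d,lam}^{α/2} u(x)` exists and equals `L`. -/
def truncFracLapPV (d : ℕ) (α lam : ℝ) (u : EuclideanSpace ℝ (Fin d) → ℝ)
    (x : EuclideanSpace ℝ (Fin d)) (L : ℝ) : Prop :=
  Tendsto (fun ε : ℝ =>
      ∫ y in {y : EuclideanSpace ℝ (Fin d) | ε < ‖y - x‖ ∧ ‖y - x‖ < lam},
        (u y - u x) * frakA d α * ‖x - y‖ ^ (-((d : ℝ) + α)))
    (nhdsWithin 0 (Set.Ioi 0)) (nhds L)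

section Statement0Aux

open Set Metric
open scoped ENNReal

namespace Statement0Aux

noncomputable def phi (p t : ℝ) : ℝ := max t 0 ^ p

lemma phi_nonneg (p t : ℝ) : 0 ≤ phi p t := Real.rpow_nonneg (le_max_right _ _) _

lemma phi_le (p : ℝ) (hp : 0 ≤ p) {t b : ℝ} (hb : 0 ≤ b) (h : t ≤ b) : phi p t ≤ b ^ p :=
  Real.rpow_le_rpow (le_max_right _ _) (max_le h hb) hp

lemma ratio_rpow_le {r s : ℝ} (h1 : 1/2 ≤ r) (h2 : r ≤ 2) : r ^ s ≤ 2 ^ |s| := by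
  rcases le_or_gt 0 s with hs | hs
  · calc r ^ s ≤ 2 ^ s := Real.rpow_le_rpow (by linarith) h2 hs
    _ ≤ 2 ^ |s| := by rw [abs_of_nonneg hs]
  · have h0 : (0:ℝ) < 1/2 := by norm_num
    calc r ^ s ≤ (1/2 : ℝ) ^ s := Real.rpow_le_rpow_of_nonpos h0 h1 hs.le
    _ = 2 ^ (-s) := by
        rw [one_div, Real.inv_rpow (by norm_num), ← Real.rpow_neg (by norm_num)]
    _ = 2 ^ |s| := by rw [abs_of_neg hs]

lemma hasDerivAt_phi (p : ℝ) {t : ℝ} (ht : 0 < t) :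
    HasDerivAt (phi p) (p * t ^ (p - 1)) t := by
  have h1 : HasDerivAt (fun s : ℝ => s ^ p) (p * t ^ (p - 1)) t :=
    Real.hasDerivAt_rpow_const (Or.inl ht.ne')
  apply h1.congr_of_eventuallyEq
  filter_upwards [eventually_gt_nhds ht] with s hs
  unfold phi; rw [max_eq_left hs.le]

/-- Smooth-regime second difference bound. -/
lemma secdiff_small (p : ℝ) (hp : 0 < p) {a h : ℝ} (ha : 0 < a) (ha1 : a ≤ 1)
    (hh0 : 0 ≤ h) (hha : 2 * h < a) :
    |phi p (a + h) + phi p (a - h) - 2 * phi p a| ≤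
      (4 * |p| * |p - 1| * 2 ^ |p - 2|) * |h| ^ min p 2 := by
  rcases eq_or_lt_of_le hh0 with rfl | hh
  · simp only [add_zero, sub_zero, abs_zero]
    have h0 : |phi p a + phi p a - 2 * phi p a| = 0 := by rw [abs_eq_zero]; ring
    rw [h0]
    positivity
  -- now 0 < h, 2h < a
  set L : ℝ := |p| * |p - 1| * 2 ^ |p - 2| * a ^ (p - 2) with hL
  have hLnn : 0 ≤ L := by positivity
  set ψ : ℝ → ℝ := fun t => p * t ^ (p - 1) with hψ
  set J : Set ℝ := Icc (a - h) (a + h) with hJ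
  have hJpos : ∀ t ∈ J, 0 < t := by
    intro t htJ
    simp only [hJ, mem_Icc] at htJ
    linarith [htJ.1]
  -- Lipschitz bound for ψ on J
  have hψlip : ∀ s ∈ J, ∀ t ∈ J, |ψ s - ψ t| ≤ L * |s - t| := by
    intro s hs t ht
    have hder : ∀ u ∈ J, HasDerivWithinAt ψ (p * ((p - 1) * u ^ (p - 1 - 1))) J u :=
      fun u hu => ((Real.hasDerivAt_rpow_const
        (p := p - 1) (Or.inl (hJpos u hu).ne')).const_mul p).hasDerivWithinAt
    have hbound : ∀ u ∈ J, ‖p * ((p - 1) * u ^ (p - 1 - 1))‖ ≤ L := by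
      intro u hu
      have hu0 := hJpos u hu
      have hmem := hu; simp only [hJ, mem_Icc] at hmem
      have hratio : u ^ (p - 2) ≤ a ^ (p - 2) * 2 ^ |p - 2| := by
        have heq : u ^ (p - 2) = a ^ (p - 2) * (u / a) ^ (p - 2) := by
          rw [← Real.mul_rpow ha.le (by positivity), mul_div_cancel₀ _ ha.ne']
        rw [heq]
        have h1 : 1/2 ≤ u / a := by rw [le_div_iff₀ ha]; linarith [hmem.1]
        have h2 : u / a ≤ 2 := by rw [div_le_iff₀ ha]; linarith [hmem.2]
        have hr := ratio_rpow_le (s := p - 2) h1 h2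
        have hann : (0:ℝ) ≤ a ^ (p - 2) := by positivity
        exact mul_le_mul_of_nonneg_left hr hann
      have h2 : p - 1 - 1 = p - 2 := by ring
      rw [h2, Real.norm_eq_abs, abs_mul, abs_mul,
        abs_of_nonneg (Real.rpow_nonneg hu0.le _)]
      calc |p| * (|p - 1| * u ^ (p - 2))
          ≤ |p| * (|p - 1| * (a ^ (p - 2) * 2 ^ |p - 2|)) :=
            mul_le_mul_of_nonneg_left
              (mul_le_mul_of_nonneg_left hratio (abs_nonneg _)) (abs_nonneg _)
        _ = L := by rw [hL]; ring
    have := (convex_Icc (a - h) (a + h)).norm_image_sub_le_of_norm_hasDerivWithin_le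
      hder hbound ht hs
    simpa [Real.norm_eq_abs] using this
  -- the symmetrized function g
  set g : ℝ → ℝ := fun t => phi p (a + t) + phi p (a - t) - 2 * phi p a with hg
  have hgder : ∀ t ∈ Icc (0:ℝ) h, HasDerivWithinAt g (ψ (a + t) - ψ (a - t)) (Icc 0 h) t := by
    intro t htI
    simp only [mem_Icc] at htI
    have hat : 0 < a + t := by linarith [htI.1]
    have hat' : 0 < a - t := by linarith [htI.2]
    have d1 : HasDerivAt (fun t : ℝ => phi p (a + t)) (ψ (a + t)) t := by
      have hinner : HasDerivAt (fun t : ℝ => a + t) 1 t := (hasDerivAt_id t).const_add a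
      have := (hasDerivAt_phi p hat).comp t hinner
      simpa [hψ, Function.comp_def] using this
    have d2 : HasDerivAt (fun t : ℝ => phi p (a - t)) (-ψ (a - t)) t := by
      have hinner : HasDerivAt (fun t : ℝ => a - t) (-1) t := (hasDerivAt_id t).const_sub a
      have := (hasDerivAt_phi p hat').comp t hinner
      simpa [hψ, Function.comp_def] using this
    have := ((d1.add d2).sub_const (2 * phi p a)).hasDerivWithinAt (s := Icc 0 h)
    exact this
  have hgbound : ∀ t ∈ Icc (0:ℝ) h, ‖ψ (a + t) - ψ (a - t)‖ ≤ L * (2 * h) := by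
    intro t htI
    simp only [mem_Icc] at htI
    have hmem1 : a + t ∈ J := by simp only [hJ, mem_Icc]; constructor <;> linarith [htI.1, htI.2]
    have hmem2 : a - t ∈ J := by simp only [hJ, mem_Icc]; constructor <;> linarith [htI.1, htI.2]
    have := hψlip _ hmem1 _ hmem2
    have habs : |a + t - (a - t)| = 2 * t := by rw [abs_of_nonneg (by linarith [htI.1])]; ring
    rw [Real.norm_eq_abs]
    calc |ψ (a + t) - ψ (a - t)| ≤ L * |a + t - (a - t)| := this
      _ = L * (2 * t) := by rw [habs]
      _ ≤ L * (2 * h) := by nlinarith [htI.2]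
  have hkey : |g h - g 0| ≤ L * (2 * h) * h := by
    have := (convex_Icc (0:ℝ) h).norm_image_sub_le_of_norm_hasDerivWithin_le
      hgder hgbound (left_mem_Icc.2 hh0) (right_mem_Icc.2 hh0)
    rw [Real.norm_eq_abs, Real.norm_eq_abs, sub_zero, abs_of_pos hh] at this
    exact this
  have hg0 : g 0 = 0 := by simp only [hg, add_zero, sub_zero]; ring
  rw [hg0, sub_zero] at hkey
  -- convert  L * 2h * h  into  C * |h|^q
  have habs : |h| = h := abs_of_pos hh
  have hconv : a ^ (p - 2) * (2 * h) * h ≤ 4 * |h| ^ min p 2 := by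
    rcases le_or_gt 2 p with hp2 | hp2
    · have hq : min p 2 = 2 := min_eq_right hp2
      have ha2 : a ^ (p - 2) ≤ 1 := Real.rpow_le_one ha.le ha1 (by linarith)
      have h2 : |h| ^ (2:ℝ) = h * h := by
        rw [habs, show (2:ℝ) = ((2:ℕ):ℝ) by norm_num, Real.rpow_natCast]; ring
      rw [hq, h2]
      nlinarith [hh.le]
    · have hq : min p 2 = p := min_eq_left hp2.le
      have ha2 : a ^ (p - 2) ≤ (2 * h) ^ (p - 2) :=
        Real.rpow_le_rpow_of_nonpos (by linarith) hha.le (by linarith)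
      have h2h : (2 * h) ^ (p - 2) = 2 ^ (p - 2) * h ^ (p - 2) :=
        Real.mul_rpow (by norm_num) hh.le
      have h21 : (2:ℝ) ^ (p - 2) ≤ 1 :=
        Real.rpow_le_one_of_one_le_of_nonpos (by norm_num) (by linarith)
      have hcomb : h ^ (p - 2) * (h * h) = h ^ p := by
        have h2 : h * h = h ^ (2:ℝ) := by
          rw [show (2:ℝ) = ((2:ℕ):ℝ) by norm_num, Real.rpow_natCast]; ring
        rw [h2, ← Real.rpow_add hh]; ring_nf
      have hhp : (0:ℝ) ≤ h ^ (p - 2) := Real.rpow_nonneg hh.le _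
      rw [hq, habs]
      calc a ^ (p - 2) * (2 * h) * h ≤ (2 ^ (p - 2) * h ^ (p - 2)) * (2 * h) * h := by
            rw [← h2h]
            nlinarith [hh.le, ha2, Real.rpow_nonneg (by linarith : (0:ℝ) ≤ 2 * h) (p - 2)]
        _ = 2 ^ (p - 2) * 2 * (h ^ (p - 2) * (h * h)) := by ring
        _ = 2 ^ (p - 2) * 2 * h ^ p := by rw [hcomb]
        _ ≤ 4 * h ^ p := by nlinarith [Real.rpow_nonneg hh.le p, h21, Real.rpow_pos_of_pos hh p]
  calc |g h| ≤ L * (2 * h) * h := hkey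
    _ = (|p| * |p - 1| * 2 ^ |p - 2|) * (a ^ (p - 2) * (2 * h) * h) := by rw [hL]; ring
    _ ≤ (|p| * |p - 1| * 2 ^ |p - 2|) * (4 * |h| ^ min p 2) :=
        mul_le_mul_of_nonneg_left hconv (by positivity)
    _ = (4 * |p| * |p - 1| * 2 ^ |p - 2|) * |h| ^ min p 2 := by ring

/-- Uniform second-difference bound for `φ(t) = max(t,0)^p`. -/
lemma secdiff (p : ℝ) (hp : 0 < p) :
    ∃ C : ℝ, 0 < C ∧ ∀ a h : ℝ, 0 < a → a ≤ 1 → |h| ≤ 1 →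
      |phi p (a + h) + phi p (a - h) - 2 * phi p a| ≤ C * |h| ^ min p 2 := by
  have hq0 : 0 < min p 2 := lt_min hp two_pos
  refine ⟨4 * 3 ^ p + 4 * |p| * |p - 1| * 2 ^ |p - 2| + 1, by positivity, ?_⟩
  intro a h ha ha1 hh1
  have hCnn : (0:ℝ) ≤ |h| ^ min p 2 := Real.rpow_nonneg (abs_nonneg _) _
  rcases eq_or_ne h 0 with rfl | hne
  · have h0 : |phi p (a + 0) + phi p (a - 0) - 2 * phi p a| = 0 := by
      rw [abs_eq_zero]; ring
    rw [h0]; positivity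
  have hhpos : 0 < |h| := abs_pos.2 hne
  rcases le_or_gt a (2 * |h|) with hcase | hcase
  · -- rough regime
    have hb1 : phi p (a + h) ≤ (3 * |h|) ^ p := by
      apply phi_le p hp.le (by positivity)
      have := le_abs_self h
      nlinarith [abs_nonneg h]
    have hb2 : phi p (a - h) ≤ (3 * |h|) ^ p := by
      apply phi_le p hp.le (by positivity)
      have := neg_abs_le h
      nlinarith [abs_nonneg h]
    have hb3 : phi p a ≤ (3 * |h|) ^ p := by
      apply phi_le p hp.le (by positivity)
      nlinarith [abs_nonneg h]
    have hnn1 := phi_nonneg p (a + h)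
    have hnn2 := phi_nonneg p (a - h)
    have hnn3 := phi_nonneg p a
    have hsum : |phi p (a + h) + phi p (a - h) - 2 * phi p a| ≤ 4 * (3 * |h|) ^ p := by
      rw [abs_le]
      constructor <;> nlinarith [Real.rpow_nonneg (by positivity : (0:ℝ) ≤ 3 * |h|) p]
    have hmul : (3 * |h|) ^ p = 3 ^ p * |h| ^ p := Real.mul_rpow (by norm_num) (abs_nonneg _)
    have hpq : |h| ^ p ≤ |h| ^ min p 2 :=
      Real.rpow_le_rpow_of_exponent_ge hhpos hh1 (min_le_left _ _)
    calc |phi p (a + h) + phi p (a - h) - 2 * phi p a| ≤ 4 * (3 * |h|) ^ p := hsum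
      _ = 4 * 3 ^ p * |h| ^ p := by rw [hmul]; ring
      _ ≤ 4 * 3 ^ p * |h| ^ min p 2 := by
          have h3 : (0:ℝ) < 3 ^ p := Real.rpow_pos_of_pos (by norm_num) p
          nlinarith
      _ ≤ (4 * 3 ^ p + 4 * |p| * |p - 1| * 2 ^ |p - 2| + 1) * |h| ^ min p 2 := by
          have h4 : (0:ℝ) ≤ 4 * |p| * |p - 1| * 2 ^ |p - 2| + 1 := by positivity
          nlinarith
  · -- smooth regime
    rcases le_or_gt 0 h with hh0 | hh0
    · have habs : |h| = h := abs_of_nonneg hh0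
      rw [habs] at hcase
      have hsmall := secdiff_small p hp ha ha1 hh0 hcase
      calc |phi p (a + h) + phi p (a - h) - 2 * phi p a|
          ≤ (4 * |p| * |p - 1| * 2 ^ |p - 2|) * |h| ^ min p 2 := hsmall
        _ ≤ (4 * 3 ^ p + 4 * |p| * |p - 1| * 2 ^ |p - 2| + 1) * |h| ^ min p 2 := by
            have h3 : (0:ℝ) < 3 ^ p := Real.rpow_pos_of_pos (by norm_num) p
            nlinarith
    · have habs : |h| = -h := abs_of_neg hh0
      rw [habs] at hcase
      have hsmall := secdiff_small p hp ha ha1 (by linarith : (0:ℝ) ≤ -h) hcase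
      rw [show a + -h = a - h by ring, show a - -h = a + h by ring] at hsmall
      rw [show |(-h)| = |h| by rw [abs_neg]] at hsmall
      calc |phi p (a + h) + phi p (a - h) - 2 * phi p a|
          = |phi p (a - h) + phi p (a + h) - 2 * phi p a| := by rw [add_comm (phi p (a + h))]
        _ ≤ (4 * |p| * |p - 1| * 2 ^ |p - 2|) * |h| ^ min p 2 := hsmall
        _ ≤ (4 * 3 ^ p + 4 * |p| * |p - 1| * 2 ^ |p - 2| + 1) * |h| ^ min p 2 := by
            have h3 : (0:ℝ) < 3 ^ p := Real.rpow_pos_of_pos (by norm_num) p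
            nlinarith

variable {E : Type*} [NormedAddCommGroup E] [NormedSpace ℝ E] [MeasurableSpace E]
  [BorelSpace E] [FiniteDimensional ℝ E]

lemma integrableOn_norm_rpow_ball (μ : Measure E) [μ.IsAddHaarMeasure] {s : ℝ}
    (hs : -(Module.finrank ℝ E : ℝ) < s) :
    IntegrableOn (fun z : E => ‖z‖ ^ s) (ball (0:E) 1) μ := by
  have hmeas : Measurable fun z : E => ‖z‖ ^ s := by fun_prop
  rcases le_or_gt 0 s with hs0 | hs0
  · refine Integrable.mono' ((integrableOn_const (C := (1:ℝ)) measure_ball_lt_top.ne))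
      hmeas.aestronglyMeasurable.restrict ?_
    filter_upwards [ae_restrict_mem measurableSet_ball] with z hz
    rw [Real.norm_eq_abs, abs_of_nonneg (Real.rpow_nonneg (norm_nonneg _) _)]
    exact Real.rpow_le_one (norm_nonneg _) (le_of_lt (mem_ball_zero_iff.1 hz)) hs0
  · constructor
    · exact hmeas.aestronglyMeasurable.restrict
    · rw [hasFiniteIntegral_iff_ofReal
        (Eventually.of_forall fun z => Real.rpow_nonneg (norm_nonneg _) _)]
      set ν := μ.restrict (ball (0:E) 1) with hν
      rw [lintegral_eq_lintegral_meas_le ν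
        (Eventually.of_forall fun z => Real.rpow_nonneg (norm_nonneg _) _)
        hmeas.aemeasurable]
      set n := Module.finrank ℝ E with hn
      have hfin : μ (ball (0:E) 1) < ∞ := measure_ball_lt_top
      calc ∫⁻ t in Ioi (0:ℝ), ν {a : E | t ≤ ‖a‖ ^ s}
          ≤ ∫⁻ t in Ioc (0:ℝ) 1 ∪ Ioi 1, ν {a : E | t ≤ ‖a‖ ^ s} :=
            lintegral_mono_set Ioi_subset_Ioc_union_Ioi
        _ ≤ (∫⁻ t in Ioc (0:ℝ) 1, ν {a : E | t ≤ ‖a‖ ^ s})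
            + ∫⁻ t in Ioi (1:ℝ), ν {a : E | t ≤ ‖a‖ ^ s} := lintegral_union_le _ _ _
        _ < ∞ := by
            refine ENNReal.add_lt_top.2 ⟨?_, ?_⟩
            · calc ∫⁻ t in Ioc (0:ℝ) 1, ν {a : E | t ≤ ‖a‖ ^ s}
                  ≤ ∫⁻ _ in Ioc (0:ℝ) 1, μ (ball (0:E) 1) := by
                    refine lintegral_mono fun t => ?_
                    calc ν {a : E | t ≤ ‖a‖ ^ s} ≤ ν univ := measure_mono (subset_univ _)
                      _ = μ (ball (0:E) 1) := Measure.restrict_apply_univ _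
                _ < ∞ := by
                    rw [setLIntegral_const]
                    exact ENNReal.mul_lt_top hfin (by simp [Real.volume_Ioc])
            · have hsub : ∀ t : ℝ, 1 < t →
                  {a : E | t ≤ ‖a‖ ^ s} ⊆ closedBall (0:E) (t ^ s⁻¹) := by
                intro t ht a ha
                simp only [mem_setOf_eq] at ha
                have ht0 : 0 < t := by linarith
                have hane : a ≠ 0 := by
                  intro h0
                  rw [h0, norm_zero, Real.zero_rpow hs0.ne] at ha
                  linarith
                have hnorm : 0 < ‖a‖ := norm_pos_iff.2 hane
                rw [mem_closedBall_zero_iff]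
                exact (Real.le_rpow_inv_iff_of_neg hnorm ht0 hs0).2 ha
              have hbound : ∀ t ∈ Ioi (1:ℝ), ν {a : E | t ≤ ‖a‖ ^ s}
                  ≤ ENNReal.ofReal (t ^ (s⁻¹ * n)) * μ (ball (0:E) 1) := by
                intro t ht
                rw [mem_Ioi] at ht
                have ht0 : (0:ℝ) < t := by linarith
                calc ν {a : E | t ≤ ‖a‖ ^ s} ≤ μ (closedBall (0:E) (t ^ s⁻¹)) :=
                      le_trans (Measure.restrict_apply_le _ _) (measure_mono (hsub t ht))
                  _ = ENNReal.ofReal ((t ^ s⁻¹) ^ n) * μ (ball 0 1) :=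
                      Measure.addHaar_closedBall μ _ (Real.rpow_nonneg ht0.le _)
                  _ = ENNReal.ofReal (t ^ (s⁻¹ * n)) * μ (ball 0 1) := by
                      rw [← Real.rpow_natCast (t ^ s⁻¹) n, ← Real.rpow_mul ht0.le]
              calc ∫⁻ t in Ioi (1:ℝ), ν {a : E | t ≤ ‖a‖ ^ s}
                  ≤ ∫⁻ t in Ioi (1:ℝ), ENNReal.ofReal (t ^ (s⁻¹ * n)) * μ (ball (0:E) 1) :=
                    setLIntegral_mono' measurableSet_Ioi hbound
                _ = (∫⁻ t in Ioi (1:ℝ), ENNReal.ofReal (t ^ (s⁻¹ * n))) * μ (ball (0:E) 1) :=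
                    lintegral_mul_const' _ _ hfin.ne
                _ < ∞ := by
                    refine ENNReal.mul_lt_top ?_ hfin
                    refine IntegrableOn.setLIntegral_lt_top ?_
                    refine integrableOn_Ioi_rpow_of_lt ?_ one_pos
                    have hns : (n:ℝ) / s < -1 := by
                      rw [div_lt_iff_of_neg hs0]
                      have hsn : -(n:ℝ) < s := hs
                      linarith
                    calc s⁻¹ * (n:ℝ) = (n:ℝ)/s := by rw [div_eq_inv_mul]
                      _ < -1 := hns

lemma abs_coord_le_norm {d : ℕ} (z : EuclideanSpace ℝ (Fin d)) (i : Fin d) : |z i| ≤ ‖z‖ := by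
  rw [EuclideanSpace.norm_eq, ← Real.sqrt_sq_eq_abs]
  apply Real.sqrt_le_sqrt
  have := Finset.single_le_sum (f := fun j => ‖z j‖ ^ 2)
    (fun j _ => sq_nonneg _) (Finset.mem_univ i)
  simpa [Real.norm_eq_abs, sq_abs] using this

end Statement0Aux

end Statement0Aux

open Statement0Aux Set Metric
open scoped ENNReal

theorem statement0 (d : ℕ) (hd : 0 < d) (α p : ℝ) (hα1 : 0 < α) (hα2 : α < 2)
    (hp : α < p) :
    ∃ Rstar C : ℝ, Rstar ∈ Set.Ioo (0 : ℝ) 1 ∧ 0 < C ∧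
      ∀ x : EuclideanSpace ℝ (Fin d), x ⟨0, hd⟩ ∈ Set.Ioc (0 : ℝ) Rstar →
        ∃ L : ℝ, truncFracLapPV d α 1 (wp d hd p) x L ∧ |L| ≤ C := by
  classical
  set i0 : Fin d := ⟨0, hd⟩ with hi0
  set q : ℝ := min p 2 with hqdef
  have hp0 : 0 < p := hα1.trans hp
  have hq0 : 0 < q := lt_min hp0 two_pos
  have hqα : α < q := lt_min hp hα2
  have hq2 : q ≤ 2 := min_le_right _ _
  obtain ⟨C₀, hC₀, hsec⟩ := secdiff p hp0
  set s : ℝ := q - ((d:ℝ) + α) with hsdef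
  have hd1 : (1:ℝ) ≤ (d:ℝ) := by exact_mod_cast hd
  have hdα0 : (0:ℝ) < (d:ℝ) + α := by linarith
  have hdαne : -((d:ℝ) + α) ≠ 0 := by intro h0; nlinarith [neg_eq_zero.1 h0]
  have hsd : -(Module.finrank ℝ (EuclideanSpace ℝ (Fin d)) : ℝ) < s := by
    rw [finrank_euclideanSpace_fin]
    simp only [hsdef]
    linarith
  have hGint : IntegrableOn (fun z : EuclideanSpace ℝ (Fin d) => ‖z‖ ^ s) (ball (0:EuclideanSpace ℝ (Fin d)) 1) volume :=
    integrableOn_norm_rpow_ball volume hsd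
  set c₁ : ℝ := C₀ * |frakA d α| / 2 with hc₁
  have hc₁nn : 0 ≤ c₁ := by positivity
  set G : EuclideanSpace ℝ (Fin d) → ℝ := fun z => c₁ * ‖z‖ ^ s with hG
  have hGnn : ∀ z : EuclideanSpace ℝ (Fin d), 0 ≤ G z := fun z =>
    mul_nonneg hc₁nn (Real.rpow_nonneg (norm_nonneg _) _)
  have hGint' : IntegrableOn G (ball (0:EuclideanSpace ℝ (Fin d)) 1) volume := hGint.const_mul c₁
  have hGmeas : Measurable G := by fun_prop
  set C : ℝ := (∫ z in ball (0:EuclideanSpace ℝ (Fin d)) 1, G z) + 1 with hC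
  have hCpos : 0 < C := by
    have : 0 ≤ ∫ z in ball (0:EuclideanSpace ℝ (Fin d)) 1, G z :=
      setIntegral_nonneg measurableSet_ball fun z _ => hGnn z
    rw [hC]; linarith
  refine ⟨1/2, C, ⟨by norm_num, by norm_num⟩, hCpos, ?_⟩
  intro x hx
  set a : ℝ := x i0 with ha
  have ha0 : 0 < a := hx.1
  have ha1 : a ≤ 1 := le_trans hx.2 (by norm_num)
  set u : EuclideanSpace ℝ (Fin d) → ℝ := wp d hd p with hu
  have hu_cont : Continuous u := by
    rw [hu]
    unfold wp
    apply Continuous.rpow_const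
    · exact (by fun_prop : Continuous fun y : EuclideanSpace ℝ (Fin d) => y i0).max continuous_const
    · intro y; right; exact hp0.le
  have hu_phi : ∀ y : EuclideanSpace ℝ (Fin d), u y = phi p (y i0) := fun y => rfl
  set f : EuclideanSpace ℝ (Fin d) → ℝ := fun z => (u (x + z) - u x) * frakA d α * ‖z‖ ^ (-((d:ℝ) + α)) with hf
  have hmeas_f : Measurable f := by
    apply Measurable.mul
    · apply Measurable.mul
      · exact ((hu_cont.comp (continuous_const.add continuous_id)).sub continuous_const).measurable
      · exact measurable_const
    · fun_prop
  set S : EuclideanSpace ℝ (Fin d) → ℝ := fun z => (f z + f (-z)) / 2 with hS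
  have hmeas_S : Measurable S := ((hmeas_f.add (hmeas_f.comp measurable_neg)).div_const 2)
  have hrpow0 : (‖(0:EuclideanSpace ℝ (Fin d))‖ : ℝ) ^ (-((d:ℝ) + α)) = 0 := by
    rw [norm_zero, Real.zero_rpow hdαne]
  have hf0 : f 0 = 0 := by rw [hf]; simp only [add_zero]; rw [hrpow0]; ring
  have hS0 : S 0 = 0 := by rw [hS]; simp only [neg_zero]; rw [hf0]; norm_num
  -- coordinates
  have hcoord_add : ∀ z : EuclideanSpace ℝ (Fin d), (x + z) i0 = a + z i0 := fun z => rfl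
  have hcoord_neg : ∀ z : EuclideanSpace ℝ (Fin d), (x + -z) i0 = a - z i0 := fun z => by
    have : (x + -z) i0 = x i0 + (-z) i0 := rfl
    rw [this]; show a + -(z i0) = a - z i0; ring
  -- the key pointwise bound
  have hfS : ∀ z : EuclideanSpace ℝ (Fin d), ‖z‖ < 1 → |S z| ≤ G z := by
    intro z hz1
    rcases eq_or_ne z 0 with rfl | hzne
    · rw [hS0, abs_zero]; exact hGnn 0
    have hz0 : 0 < ‖z‖ := norm_pos_iff.2 hzne
    have hcoord : |z i0| ≤ ‖z‖ := abs_coord_le_norm z i0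
    have hsum : f z + f (-z) =
        (phi p (a + z i0) + phi p (a - z i0) - 2 * phi p a) * frakA d α
          * ‖z‖ ^ (-((d:ℝ) + α)) := by
      rw [hf]
      simp only [norm_neg]
      rw [hu_phi (x + z), hu_phi (x + -z), hu_phi x, hcoord_add z, hcoord_neg z, ← ha]
      ring
    have hB : |phi p (a + z i0) + phi p (a - z i0) - 2 * phi p a| ≤ C₀ * ‖z‖ ^ q := by
      have h1 := hsec a (z i0) ha0 ha1 (le_trans hcoord hz1.le)
      have h2 : |z i0| ^ q ≤ ‖z‖ ^ q := Real.rpow_le_rpow (abs_nonneg _) hcoord hq0.le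
      calc |phi p (a + z i0) + phi p (a - z i0) - 2 * phi p a| ≤ C₀ * |z i0| ^ q := h1
        _ ≤ C₀ * ‖z‖ ^ q := mul_le_mul_of_nonneg_left h2 hC₀.le
    have hXnn : (0:ℝ) ≤ ‖z‖ ^ (-((d:ℝ) + α)) := Real.rpow_nonneg (norm_nonneg _) _
    have hSabs : |S z| = |phi p (a + z i0) + phi p (a - z i0) - 2 * phi p a|
        * |frakA d α| * ‖z‖ ^ (-((d:ℝ) + α)) / 2 := by
      rw [hS]
      show |(f z + f (-z)) / 2| = _
      rw [hsum, abs_div, abs_mul, abs_mul, abs_of_nonneg hXnn]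
      norm_num
    rw [hSabs]
    have step : |phi p (a + z i0) + phi p (a - z i0) - 2 * phi p a|
        * |frakA d α| * ‖z‖ ^ (-((d:ℝ) + α)) ≤
        (C₀ * ‖z‖ ^ q) * |frakA d α| * ‖z‖ ^ (-((d:ℝ) + α)) := by
      have := mul_le_mul_of_nonneg_right
        (mul_le_mul_of_nonneg_right hB (abs_nonneg (frakA d α))) hXnn
      exact this
    have hGz : (C₀ * ‖z‖ ^ q) * |frakA d α| * ‖z‖ ^ (-((d:ℝ) + α)) / 2 = G z := by
      have hexp : q + (-((d:ℝ) + α)) = s := by rw [hsdef]; ring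
      have hqs : ‖z‖ ^ q * ‖z‖ ^ (-((d:ℝ) + α)) = ‖z‖ ^ s := by
        rw [← Real.rpow_add hz0, hexp]
      simp only [hG, hc₁]
      calc (C₀ * ‖z‖ ^ q) * |frakA d α| * ‖z‖ ^ (-((d:ℝ) + α)) / 2
          = C₀ * |frakA d α| / 2 * (‖z‖ ^ q * ‖z‖ ^ (-((d:ℝ) + α))) := by ring
        _ = C₀ * |frakA d α| / 2 * ‖z‖ ^ s := by rw [hqs]
    rw [← hGz]
    linarith
  -- integrability of S on the unit ball
  have hSint : IntegrableOn S (ball (0:EuclideanSpace ℝ (Fin d)) 1) volume := by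
    refine Integrable.mono' hGint' hmeas_S.aestronglyMeasurable.restrict ?_
    filter_upwards [ae_restrict_mem measurableSet_ball] with z hz
    rw [Real.norm_eq_abs]
    exact hfS z (mem_ball_zero_iff.1 hz)
  -- the limit value
  set L : ℝ := ∫ z in ball (0:EuclideanSpace ℝ (Fin d)) 1 \ {0}, S z with hL
  have hmeasD : MeasurableSet (ball (0:EuclideanSpace ℝ (Fin d)) 1 \ {0}) :=
    measurableSet_ball.diff (measurableSet_singleton 0)
  have hSintD : IntegrableOn S (ball (0:EuclideanSpace ℝ (Fin d)) 1 \ {0}) volume := hSint.mono_set diff_subset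
  have hGintD : IntegrableOn G (ball (0:EuclideanSpace ℝ (Fin d)) 1 \ {0}) volume := hGint'.mono_set diff_subset
  -- the bound on L
  have hLbound : |L| ≤ C := by
    have h1 : |L| ≤ ∫ z in ball (0:EuclideanSpace ℝ (Fin d)) 1 \ {0}, |S z| := by
      rw [hL, ← Real.norm_eq_abs]
      exact (norm_integral_le_integral_norm _).trans (le_of_eq (by simp [Real.norm_eq_abs]))
    have h2 : (∫ z in ball (0:EuclideanSpace ℝ (Fin d)) 1 \ {0}, |S z|) ≤ ∫ z in ball (0:EuclideanSpace ℝ (Fin d)) 1 \ {0}, G z := by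
      refine setIntegral_mono_on hSintD.abs hGintD hmeasD fun z hz => hfS z ?_
      exact mem_ball_zero_iff.1 hz.1
    have h3 : (∫ z in ball (0:EuclideanSpace ℝ (Fin d)) 1 \ {0}, G z) ≤ ∫ z in ball (0:EuclideanSpace ℝ (Fin d)) 1, G z := by
      refine setIntegral_mono_set hGint' ?_ (HasSubset.Subset.eventuallyLE diff_subset)
      filter_upwards with z using hGnn z
    rw [hC]
    linarith
  -- measurability of annuli
  have hAmeas : ∀ ε : ℝ, MeasurableSet {z : EuclideanSpace ℝ (Fin d) | ε < ‖z‖ ∧ ‖z‖ < 1} := by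
    intro ε
    have : {z : EuclideanSpace ℝ (Fin d) | ε < ‖z‖ ∧ ‖z‖ < 1} = {z : EuclideanSpace ℝ (Fin d) | ε < ‖z‖} ∩ {z : EuclideanSpace ℝ (Fin d) | ‖z‖ < 1} := rfl
    rw [this]
    exact (measurableSet_lt measurable_const measurable_norm).inter
      (measurableSet_lt measurable_norm measurable_const)
  have hAsub : ∀ ε : ℝ, {z : EuclideanSpace ℝ (Fin d) | ε < ‖z‖ ∧ ‖z‖ < 1} ⊆ ball (0:EuclideanSpace ℝ (Fin d)) 1 := by
    intro ε z hz; exact mem_ball_zero_iff.2 hz.2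
  -- Step T1 : convergence of the symmetrized integrals
  have hT1 : Tendsto (fun ε : ℝ => ∫ z in {z : EuclideanSpace ℝ (Fin d) | ε < ‖z‖ ∧ ‖z‖ < 1}, S z)
      (nhdsWithin 0 (Set.Ioi 0)) (nhds L) := by
    apply tendsto_of_seq_tendsto
    intro v hv
    have hv0 : Tendsto v atTop (nhds 0) := hv.mono_right nhdsWithin_le_nhds
    have main : Tendsto (fun n => ∫ z : EuclideanSpace ℝ (Fin d), ({z : EuclideanSpace ℝ (Fin d) | v n < ‖z‖ ∧ ‖z‖ < 1}).indicator S z)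
        atTop (nhds (∫ z : EuclideanSpace ℝ (Fin d), (ball (0:EuclideanSpace ℝ (Fin d)) 1 \ {0}).indicator S z)) := by
      refine tendsto_integral_of_dominated_convergence ((ball (0:EuclideanSpace ℝ (Fin d)) 1).indicator G)
        (fun n => (hmeas_S.indicator (hAmeas (v n))).aestronglyMeasurable)
        (hGint'.integrable_indicator measurableSet_ball) (fun n => ?_) ?_
      · filter_upwards with z
        by_cases hz : z ∈ {z : EuclideanSpace ℝ (Fin d) | v n < ‖z‖ ∧ ‖z‖ < 1}
        · rw [Set.indicator_of_mem hz, Set.indicator_of_mem (mem_ball_zero_iff.2 hz.2),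
            Real.norm_eq_abs]
          exact hfS z hz.2
        · rw [Set.indicator_of_notMem hz, norm_zero]
          exact Set.indicator_nonneg (fun w _ => hGnn w) z
      · filter_upwards with z
        by_cases hz1 : ‖z‖ < 1
        · rcases eq_or_ne z 0 with rfl | hzne
          · have hzero : ∀ n, ({z : EuclideanSpace ℝ (Fin d) | v n < ‖z‖ ∧ ‖z‖ < 1}).indicator S 0 = 0 := by
              intro n
              by_cases hm : (0:EuclideanSpace ℝ (Fin d)) ∈ {z : EuclideanSpace ℝ (Fin d) | v n < ‖z‖ ∧ ‖z‖ < 1}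
              · rw [Set.indicator_of_mem hm, hS0]
              · rw [Set.indicator_of_notMem hm]
            have htarget : (ball (0:EuclideanSpace ℝ (Fin d)) 1 \ {0}).indicator S 0 = 0 :=
              Set.indicator_of_notMem (fun hh => hh.2 rfl) S
            rw [htarget]
            simp only [hzero]
            exact tendsto_const_nhds
          · have hz0 : 0 < ‖z‖ := norm_pos_iff.2 hzne
            have hmemD : z ∈ ball (0:EuclideanSpace ℝ (Fin d)) 1 \ {0} := ⟨mem_ball_zero_iff.2 hz1, hzne⟩
            rw [Set.indicator_of_mem hmemD]
            refine Tendsto.congr' ?_ (tendsto_const_nhds (x := S z))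
            filter_upwards [hv0.eventually_lt_const hz0] with n hn
            exact (Set.indicator_of_mem (show z ∈ {z : EuclideanSpace ℝ (Fin d) | v n < ‖z‖ ∧ ‖z‖ < 1} from ⟨hn, hz1⟩) S).symm
        · have htarget : (ball (0:EuclideanSpace ℝ (Fin d)) 1 \ {0}).indicator S z = 0 :=
            Set.indicator_of_notMem (fun hh => hz1 (mem_ball_zero_iff.1 hh.1)) S
          rw [htarget]
          refine Tendsto.congr' ?_ (tendsto_const_nhds (x := (0:ℝ)))
          filter_upwards with n
          exact (Set.indicator_of_notMem (fun hh => hz1 hh.2) S).symm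
    have main2 := main.congr fun n => integral_indicator (hAmeas (v n))
    rw [integral_indicator hmeasD] at main2
    exact main2
  -- Step T2 : identification with the original integrals, eventually on the filter
  have hT2 : (fun ε : ℝ =>
      ∫ y in {y : EuclideanSpace ℝ (Fin d) | ε < ‖y - x‖ ∧ ‖y - x‖ < 1},
        (u y - u x) * frakA d α * ‖x - y‖ ^ (-((d:ℝ) + α)))
      =ᶠ[nhdsWithin 0 (Set.Ioi 0)]
      (fun ε : ℝ => ∫ z in {z : EuclideanSpace ℝ (Fin d) | ε < ‖z‖ ∧ ‖z‖ < 1}, S z) := by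
    filter_upwards [self_mem_nhdsWithin] with ε hε
    rw [Set.mem_Ioi] at hε
    set Aε := {z : EuclideanSpace ℝ (Fin d) | ε < ‖z‖ ∧ ‖z‖ < 1} with hAε
    -- change of variables
    have himg : (fun z : EuclideanSpace ℝ (Fin d) => x + z) '' Aε = {y : EuclideanSpace ℝ (Fin d) | ε < ‖y - x‖ ∧ ‖y - x‖ < 1} := by
      ext y
      simp only [Set.mem_image, Set.mem_setOf_eq, hAε]
      constructor
      · rintro ⟨z, hz, rfl⟩
        rwa [add_sub_cancel_left]
      · intro hy
        exact ⟨y - x, hy, by abel⟩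
    have hMP : MeasurePreserving (fun z : EuclideanSpace ℝ (Fin d) => x + z) volume volume :=
      measurePreserving_add_left volume x
    have hCV := hMP.setIntegral_image_emb (Homeomorph.addLeft x).measurableEmbedding
      (fun y => (u y - u x) * frakA d α * ‖x - y‖ ^ (-((d:ℝ) + α))) Aε
    rw [himg] at hCV
    rw [hCV]
    have hfe : (fun z : EuclideanSpace ℝ (Fin d) => (u (x + z) - u x) * frakA d α * ‖x - (x + z)‖ ^ (-((d:ℝ) + α))) = f := by
      funext z
      rw [hf]
      have : x - (x + z) = -z := by abel
      rw [this, norm_neg]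
    rw [hfe]
    -- integrability on the annulus
    set M : ℝ := 2 * (‖x‖ + 1) ^ p * |frakA d α| * ε ^ (-((d:ℝ) + α)) with hM
    have hfb : ∀ w : EuclideanSpace ℝ (Fin d), ε < ‖w‖ → ‖w‖ < 1 → |f w| ≤ M := by
      intro w hw1 hw2
      have hwnn : (0:ℝ) ≤ ‖w‖ ^ (-((d:ℝ) + α)) := Real.rpow_nonneg (norm_nonneg _) _
      have hker : ‖w‖ ^ (-((d:ℝ) + α)) ≤ ε ^ (-((d:ℝ) + α)) :=
        Real.rpow_le_rpow_of_nonpos hε hw1.le (by linarith)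
      have hub : ∀ y : EuclideanSpace ℝ (Fin d), y i0 ≤ ‖x‖ + 1 → u y ≤ (‖x‖ + 1) ^ p := by
        intro y hy
        rw [hu_phi y]
        exact phi_le p hp0.le (by positivity) hy
      have hxc : |x i0| ≤ ‖x‖ := abs_coord_le_norm x i0
      have hwc : |w i0| ≤ ‖w‖ := abs_coord_le_norm w i0
      have h1 : u (x + w) ≤ (‖x‖ + 1) ^ p := by
        apply hub
        rw [hcoord_add w, ha]
        have e1 := le_abs_self (w i0)
        have e2 := le_abs_self (x i0)
        linarith [hw2, hxc, hwc]
      have h2 : u x ≤ (‖x‖ + 1) ^ p := by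
        apply hub
        have e2 := le_abs_self (x i0)
        linarith [hxc]
      have hnn1 : 0 ≤ u (x + w) := by rw [hu_phi]; exact phi_nonneg _ _
      have hnn2 : 0 ≤ u x := by rw [hu_phi]; exact phi_nonneg _ _
      have hdiff : |u (x + w) - u x| ≤ 2 * (‖x‖ + 1) ^ p := by
        rw [abs_le]; constructor <;> linarith
      have hfw : |f w| = |u (x + w) - u x| * |frakA d α| * ‖w‖ ^ (-((d:ℝ) + α)) := by
        rw [hf, abs_mul, abs_mul, abs_of_nonneg hwnn]
      rw [hfw, hM]
      have step1 : |u (x + w) - u x| * |frakA d α| ≤ 2 * (‖x‖ + 1) ^ p * |frakA d α| :=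
        mul_le_mul_of_nonneg_right hdiff (abs_nonneg _)
      calc |u (x + w) - u x| * |frakA d α| * ‖w‖ ^ (-((d:ℝ) + α))
          ≤ (2 * (‖x‖ + 1) ^ p * |frakA d α|) * ε ^ (-((d:ℝ) + α)) :=
            mul_le_mul step1 hker hwnn (by positivity)
        _ = 2 * (‖x‖ + 1) ^ p * |frakA d α| * ε ^ (-((d:ℝ) + α)) := by ring
    have hμAε : volume Aε < ∞ := (measure_mono (hAsub ε)).trans_lt measure_ball_lt_top
    have hIf : IntegrableOn f Aε volume := by
      refine Integrable.mono' ((integrableOn_const (C := M) hμAε.ne))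
        hmeas_f.aestronglyMeasurable.restrict ?_
      filter_upwards [ae_restrict_mem (hAmeas ε)] with z hz
      rw [Real.norm_eq_abs]
      exact hfb z hz.1 hz.2
    have hIfneg : IntegrableOn (fun z => f (-z)) Aε volume := by
      refine Integrable.mono' ((integrableOn_const (C := M) hμAε.ne))
        (hmeas_f.comp measurable_neg).aestronglyMeasurable.restrict ?_
      filter_upwards [ae_restrict_mem (hAmeas ε)] with z hz
      rw [Real.norm_eq_abs]
      exact hfb (-z) (by rw [norm_neg]; exact hz.1) (by rw [norm_neg]; exact hz.2)
    -- symmetrization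
    have hneg_img : (fun z : EuclideanSpace ℝ (Fin d) => -z) '' Aε = Aε := by
      ext w
      simp only [Set.mem_image, hAε, Set.mem_setOf_eq]
      constructor
      · rintro ⟨z, hz, rfl⟩
        rwa [norm_neg]
      · intro hw
        exact ⟨-w, by rwa [norm_neg], neg_neg w⟩
    have hnegint : ∫ z in Aε, f (-z) = ∫ z in Aε, f z := by
      have hMPneg : MeasurePreserving (fun z : EuclideanSpace ℝ (Fin d) => -z) volume volume :=
        Measure.measurePreserving_neg volume
      have := hMPneg.setIntegral_image_emb (Homeomorph.neg (EuclideanSpace ℝ (Fin d))).measurableEmbedding f Aε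
      rw [hneg_img] at this
      exact this.symm
    have hsplit : ∫ z in Aε, (f z + f (-z)) ∂volume
        = (∫ z in Aε, f z) + ∫ z in Aε, f (-z) := integral_add hIf hIfneg
    calc ∫ z in Aε, f z = ((∫ z in Aε, f z) + ∫ z in Aε, f (-z)) / 2 := by
          rw [hnegint]; linarith
      _ = (∫ z in Aε, (f z + f (-z))) / 2 := by rw [hsplit]
      _ = ∫ z in Aε, (f z + f (-z)) / 2 := (integral_div 2 _).symm
      _ = ∫ z in Aε, S z := rfl
  exact ⟨L, hT1.congr' hT2.symm, hLbound⟩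
end

section
/- Let α ∈ (0,2), p > 0, x > 0 and ε ∈ (0, 1/x). Then the Lebesgue integrals below are finite and ∫_{1+ε}^{(x+1)/x} (z^p − 1)/(z−1)^{α+1} dz = ((1+ε)^p − 1)/(α·ε^α) + x^α/α − (x+1)^p · x^{α−p}/α + (p/α) · ∫_{x/(x+1)}^{1/(1+ε)} z^{α−p−1} · (1−z)^{−α} dz. -/
open MeasureTheory

set_option maxHeartbeats 2000000 in
theorem statement12 (α p x ε : ℝ) (hα1 : 0 < α) (hα2 : α < 2) (hp : 0 < p)
    (hx : 0 < x) (hε : ε ∈ Set.Ioo 0 (1 / x)) :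
    IntegrableOn (fun z : ℝ => (z ^ p - 1) / (z - 1) ^ (α + 1))
      (Set.Ioo (1 + ε) ((x + 1) / x)) ∧
    IntegrableOn (fun z : ℝ => z ^ (α - p - 1) * (1 - z) ^ (-α))
      (Set.Ioo (x / (x + 1)) (1 / (1 + ε))) ∧
    ∫ z in Set.Ioo (1 + ε) ((x + 1) / x), (z ^ p - 1) / (z - 1) ^ (α + 1)
      = ((1 + ε) ^ p - 1) / (α * ε ^ α) + x ^ α / α - (x + 1) ^ p * x ^ (α - p) / α +
          (p / α) *
            ∫ z in Set.Ioo (x / (x + 1)) (1 / (1 + ε)), z ^ (α - p - 1) * (1 - z) ^ (-α) := by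
  obtain ⟨hε0, hεx⟩ := hε
  have hx1 : (0:ℝ) < x + 1 := by linarith
  have hεx' : ε * x < 1 := (lt_div_iff₀ hx).mp hεx
  have ha1 : (1:ℝ) < 1 + ε := by linarith
  have ha0 : (0:ℝ) < 1 + ε := by linarith
  have hab : 1 + ε < (x + 1) / x := by
    rw [lt_div_iff₀ hx]; nlinarith
  have hb1 : (1:ℝ) < (x + 1) / x := lt_trans ha1 hab
  have hc0 : 0 < x / (x + 1) := div_pos hx hx1
  have hd1 : 1 / (1 + ε) < 1 := by rw [div_lt_one ha0]; linarith
  have hcd : x / (x + 1) < 1 / (1 + ε) := by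
    rw [div_lt_div_iff₀ hx1 ha0]; nlinarith
  have hd0 : (0:ℝ) < 1 / (1 + ε) := by positivity
  -- continuity of the first integrand on the closed interval
  have hcont1 : ContinuousOn (fun z : ℝ => (z ^ p - 1) / (z - 1) ^ (α + 1))
      (Set.Icc (1 + ε) ((x + 1) / x)) := by
    apply ContinuousOn.div
    · exact (continuousOn_id.rpow_const fun z hz =>
        Or.inl (by simp only [Set.mem_Icc] at hz; simp only [id_eq]; nlinarith [hz.1])).sub continuousOn_const
    · exact (continuousOn_id.sub continuousOn_const).rpow_const fun z hz =>
        Or.inr (by linarith)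
    · intro z hz
      have hz1 : 0 < z - 1 := by have := hz.1; simp only [Set.mem_Icc] at *; linarith
      exact (Real.rpow_pos_of_pos hz1 _).ne'
  -- continuity of the second integrand on the closed interval
  have hcont2 : ContinuousOn (fun z : ℝ => z ^ (α - p - 1) * (1 - z) ^ (-α))
      (Set.Icc (x / (x + 1)) (1 / (1 + ε))) := by
    apply ContinuousOn.mul
    · exact continuousOn_id.rpow_const fun z hz =>
        Or.inl (by simp only [Set.mem_Icc] at hz; simp only [id_eq]; nlinarith [hz.1])
    · exact (continuousOn_const.sub continuousOn_id).rpow_const fun z hz =>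
        Or.inl (by simp only [Set.mem_Icc] at hz; simp only [Pi.sub_apply, id_eq]; nlinarith [hz.2])
  have hint1 : IntegrableOn (fun z : ℝ => (z ^ p - 1) / (z - 1) ^ (α + 1))
      (Set.Ioo (1 + ε) ((x + 1) / x)) :=
    (hcont1.integrableOn_Icc).mono_set Set.Ioo_subset_Icc_self
  have hint2 : IntegrableOn (fun z : ℝ => z ^ (α - p - 1) * (1 - z) ^ (-α))
      (Set.Ioo (x / (x + 1)) (1 / (1 + ε))) :=
    (hcont2.integrableOn_Icc).mono_set Set.Ioo_subset_Icc_self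
  refine ⟨hint1, hint2, ?_⟩
  have hα0 : α ≠ 0 := hα1.ne'
  -- set integrals as interval integrals
  have hIoo1 : ∫ z in Set.Ioo (1 + ε) ((x + 1) / x), (z ^ p - 1) / (z - 1) ^ (α + 1)
      = ∫ z in (1 + ε)..((x + 1) / x), (z ^ p - 1) / (z - 1) ^ (α + 1) := by
    rw [intervalIntegral.integral_of_le hab.le, MeasureTheory.integral_Ioc_eq_integral_Ioo]
  have hIoo2 : ∫ z in Set.Ioo (x / (x + 1)) (1 / (1 + ε)), z ^ (α - p - 1) * (1 - z) ^ (-α)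
      = ∫ z in (x / (x + 1))..(1 / (1 + ε)), z ^ (α - p - 1) * (1 - z) ^ (-α) := by
    rw [intervalIntegral.integral_of_le hcd.le, MeasureTheory.integral_Ioc_eq_integral_Ioo]
  -- facts on the interval
  have hune : ∀ z ∈ Set.uIcc (1 + ε) ((x + 1) / x), z ≠ 0 ∧ z - 1 ≠ 0 := by
    intro z hz
    rw [Set.uIcc_of_le hab.le, Set.mem_Icc] at hz
    constructor <;> nlinarith [hz.1]
  -- integration by parts
  have hu : ∀ z ∈ Set.uIcc (1 + ε) ((x + 1) / x),
      HasDerivAt (fun z : ℝ => z ^ p - 1) (p * z ^ (p - 1)) z := fun z hz =>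
    (Real.hasDerivAt_rpow_const (Or.inl (hune z hz).1)).sub_const 1
  have hv : ∀ z ∈ Set.uIcc (1 + ε) ((x + 1) / x),
      HasDerivAt (fun z : ℝ => -(z - 1) ^ (-α) / α) ((z - 1) ^ (-α - 1)) z := by
    intro z hz
    have h1 : HasDerivAt (fun z : ℝ => z - 1) 1 z := (hasDerivAt_id z).sub_const 1
    have h2 := (h1.rpow_const (p := -α) (Or.inl (hune z hz).2)).neg.div_const α
    have e : -(1 * -α * (z - 1) ^ (-α - 1)) / α = (z - 1) ^ (-α - 1) := by
      field_simp
    rwa [e] at h2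
  have hu' : IntervalIntegrable (fun z : ℝ => p * z ^ (p - 1)) volume (1 + ε) ((x + 1) / x) := by
    apply ContinuousOn.intervalIntegrable
    exact continuousOn_const.mul (continuousOn_id.rpow_const fun z hz => Or.inl (hune z hz).1)
  have hv' : IntervalIntegrable (fun z : ℝ => (z - 1) ^ (-α - 1)) volume (1 + ε) ((x + 1) / x) := by
    apply ContinuousOn.intervalIntegrable
    exact (continuousOn_id.sub continuousOn_const).rpow_const fun z hz => Or.inl (hune z hz).2
  have hparts := intervalIntegral.integral_mul_deriv_eq_deriv_mul hu hv hu' hv'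
  have hfg : ∫ z in (1 + ε)..((x + 1) / x), (z ^ p - 1) / (z - 1) ^ (α + 1)
      = ∫ z in (1 + ε)..((x + 1) / x), (z ^ p - 1) * (z - 1) ^ (-α - 1) := by
    apply intervalIntegral.integral_congr
    intro z hz
    rw [Set.uIcc_of_le hab.le, Set.mem_Icc] at hz
    have hz1 : (0:ℝ) < z - 1 := by linarith [hz.1]
    have e : (z - 1) ^ (-α - 1) = ((z - 1) ^ (α + 1))⁻¹ := by
      rw [show -α - 1 = -(α + 1) by ring, Real.rpow_neg hz1.le]
    simp only [e, div_eq_mul_inv]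
  have huv' : ∫ z in (1 + ε)..((x + 1) / x), (p * z ^ (p - 1)) * (-(z - 1) ^ (-α) / α)
      = -(p / α) * ∫ z in (1 + ε)..((x + 1) / x), z ^ (p - 1) * (z - 1) ^ (-α) := by
    rw [← intervalIntegral.integral_const_mul]
    apply intervalIntegral.integral_congr
    intro z hz
    simp only
    rw [div_eq_mul_inv, div_eq_mul_inv]
    ring
  -- substitution z = 1/w
  have hcontg : ContinuousOn (fun z : ℝ => z ^ (p - 1) * (z - 1) ^ (-α))
      (Set.Icc (1 + ε) ((x + 1) / x)) := by
    apply ContinuousOn.mul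
    · exact continuousOn_id.rpow_const fun z hz =>
        Or.inl (by simp only [Set.mem_Icc] at hz; simp only [id_eq]; nlinarith [hz.1])
    · exact (continuousOn_id.sub continuousOn_const).rpow_const fun z hz =>
        Or.inl (by simp only [Set.mem_Icc] at hz; simp only [Pi.sub_apply, id_eq]; nlinarith [hz.1])
  have hwpos : ∀ w ∈ Set.uIcc (1 / (1 + ε)) (x / (x + 1)), 0 < w := by
    intro w hw
    rw [Set.uIcc_of_ge hcd.le, Set.mem_Icc] at hw
    exact lt_of_lt_of_le hc0 hw.1
  have hsubset : (fun w : ℝ => w⁻¹) '' Set.uIcc (1 / (1 + ε)) (x / (x + 1))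
      ⊆ Set.Icc (1 + ε) ((x + 1) / x) := by
    rintro z ⟨w, hw, rfl⟩
    have hw0 : 0 < w := hwpos w hw
    rw [Set.uIcc_of_ge hcd.le, Set.mem_Icc] at hw
    constructor
    · rw [show (1:ℝ) + ε = (1 / (1 + ε))⁻¹ by rw [one_div, inv_inv]]
      exact inv_anti₀ hw0 hw.2
    · rw [show (x + 1) / x = (x / (x + 1))⁻¹ by rw [inv_div]]
      exact inv_anti₀ hc0 hw.1
  have hsub := intervalIntegral.integral_comp_smul_deriv'
    (f := fun w : ℝ => w⁻¹) (f' := fun w : ℝ => -(w ^ 2)⁻¹)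
    (g := fun z : ℝ => z ^ (p - 1) * (z - 1) ^ (-α))
    (a := 1 / (1 + ε)) (b := x / (x + 1))
    (fun w hw => hasDerivAt_inv (hwpos w hw).ne')
    (((continuous_pow 2).continuousOn.inv₀ fun w hw =>
      pow_ne_zero 2 (hwpos w hw).ne').neg)
    (hcontg.mono hsubset)
  have e1 : (fun w : ℝ => w⁻¹) (1 / (1 + ε)) = 1 + ε := by
    simp only; rw [one_div, inv_inv]
  have e2 : (fun w : ℝ => w⁻¹) (x / (x + 1)) = (x + 1) / x := by
    simp only; rw [inv_div]
  rw [show (1 / (1 + ε))⁻¹ = 1 + ε from e1, show (x / (x + 1))⁻¹ = (x + 1) / x from e2] at hsub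
  have hptw : ∫ w in (1 / (1 + ε))..(x / (x + 1)),
        (-(w ^ 2)⁻¹) • (((fun z : ℝ => z ^ (p - 1) * (z - 1) ^ (-α)) ∘ fun w : ℝ => w⁻¹) w)
      = ∫ w in (1 / (1 + ε))..(x / (x + 1)), -(w ^ (α - p - 1) * (1 - w) ^ (-α)) := by
    apply intervalIntegral.integral_congr
    intro w hw
    have hw0 : 0 < w := hwpos w hw
    rw [Set.uIcc_of_ge hcd.le, Set.mem_Icc] at hw
    have h1w : 0 < 1 - w := by linarith [hw.2, hd1]
    simp only [Function.comp, smul_eq_mul]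
    have A : w⁻¹ ^ (p - 1) = w ^ (1 - p) := by
      rw [Real.inv_rpow hw0.le, ← Real.rpow_neg hw0.le]
      congr 1; ring
    have B : (w⁻¹ - 1) ^ (-α) = (1 - w) ^ (-α) * w ^ α := by
      rw [show w⁻¹ - 1 = (1 - w) / w by field_simp, Real.div_rpow h1w.le hw0.le,
        div_eq_mul_inv, ← Real.rpow_neg hw0.le, neg_neg]
    have C : ((w:ℝ) ^ 2)⁻¹ = w ^ (-2 : ℝ) := by
      rw [← Real.rpow_natCast w 2, ← Real.rpow_neg hw0.le]
      norm_num
    have D : w ^ (-2 : ℝ) * (w ^ (1 - p) * w ^ α) = w ^ (α - p - 1) := by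
      rw [← Real.rpow_add hw0, ← Real.rpow_add hw0]
      congr 1; ring
    rw [A, B, C, ← D]
    ring
  have hneg : ∫ w in (1 / (1 + ε))..(x / (x + 1)), -(w ^ (α - p - 1) * (1 - w) ^ (-α))
      = ∫ w in (x / (x + 1))..(1 / (1 + ε)), w ^ (α - p - 1) * (1 - w) ^ (-α) := by
    rw [intervalIntegral.integral_neg, intervalIntegral.integral_symm, neg_neg]
  have hJ : ∫ z in (1 + ε)..((x + 1) / x), z ^ (p - 1) * (z - 1) ^ (-α)
      = ∫ z in Set.Ioo (x / (x + 1)) (1 / (1 + ε)), z ^ (α - p - 1) * (1 - z) ^ (-α) := by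
    have h : ∫ w in (1 / (1 + ε))..(x / (x + 1)), -(w ^ (α - p - 1) * (1 - w) ^ (-α))
        = ∫ z in (1 + ε)..((x + 1) / x), z ^ (p - 1) * (z - 1) ^ (-α) := hptw.symm.trans hsub
    rw [hneg] at h
    exact h.symm.trans hIoo2.symm
  rw [hIoo1, hfg, hparts, huv', hJ]
  -- boundary algebra
  rw [show (1:ℝ) + ε - 1 = ε by ring, show (x + 1) / x - 1 = x⁻¹ by field_simp; ring,
      Real.inv_rpow hx.le, ← Real.rpow_neg hx.le, neg_neg,
      Real.div_rpow (by linarith : (0:ℝ) ≤ x + 1) hx.le,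
      Real.rpow_neg hε0.le, Real.rpow_sub hx]
  have hxp : (0:ℝ) < x ^ p := Real.rpow_pos_of_pos hx p
  have hεα : (0:ℝ) < ε ^ α := Real.rpow_pos_of_pos hε0 α
  field_simp
  ring
end

section
/- Let α ∈ (0,2) and p > 0, and set d = 1. For every x ∈ (0,1), the principal-value limit Δ̂_1^{α/2} w_p(x) := lim_{ε→0+} ∫_{{y ∈ ℝ : ε < |y−x| < 1}} (w_p(y) − w_p(x)) · 𝒜(1,α) · |x−y|^{−1−α} dy exists and equals (𝒜(1,α)/α) · ( 2x^p − (x+1)^p + p·x^{p−α} · ( ∫_{x/(x+1)}^{1} (z^{α−p−1} − z^{p−1})/(1−z)^α dz − ∫_{0}^{x/(x+1)} z^{p−1}/(1−z)^α dz ) ), where both inner Lebesgue integrals are finite. -/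
open MeasureTheory Filter Set



open MeasureTheory Filter

lemma rpow_le_bound {a z r : ℝ} (ha : 0 < a) (h1 : a ≤ z) (h2 : z ≤ 1) : z ^ r ≤ a ^ r + 1 := by
  rcases le_or_gt 0 r with hr | hr
  · have h0 : (0:ℝ) ≤ z := le_trans ha.le h1
    have := Real.rpow_le_one h0 h2 hr
    have : (0:ℝ) ≤ a ^ r := (Real.rpow_pos_of_pos ha r).le
    linarith [Real.rpow_le_one h0 h2 hr]
  · have := Real.rpow_le_rpow_of_nonpos ha h1 hr.le
    linarith

lemma int_g2_Icc {α p lo hi : ℝ} (hlo : 0 < lo) (hhi : hi < 1) :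
    IntegrableOn (fun z : ℝ => z^(p-1)/(1-z)^α) (Set.Icc lo hi) := by
  have hcont : ContinuousOn (fun z : ℝ => z^(p-1)/(1-z)^α) (Set.Icc lo hi) := by
    intro z hz
    have hz0 : 0 < z := lt_of_lt_of_le hlo hz.1
    have hz1 : 0 < 1 - z := by linarith [lt_of_le_of_lt hz.2 hhi]
    exact ((continuousAt_id.rpow_const (Or.inl hz0.ne')).div
      (((continuous_const.sub continuous_id).continuousAt).rpow_const (Or.inl hz1.ne'))
      (Real.rpow_pos_of_pos hz1 _).ne').continuousWithinAt
  exact hcont.integrableOn_compact (μ := volume) isCompact_Icc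

lemma int_g1 {α p x : ℝ} (hα1 : 0 < α) (hα2 : α < 2) (hp : 0 < p) (hx0 : 0 < x) :
    IntegrableOn (fun z : ℝ => (z ^ (α - p - 1) - z ^ (p - 1)) / (1 - z) ^ α)
      (Set.Ioo (x/(x+1)) 1) := by
  set a := x/(x+1) with ha_def
  have hx1 : (0:ℝ) < x + 1 := by linarith
  have ha0 : 0 < a := div_pos hx0 hx1
  have ha1 : a < 1 := (div_lt_one hx1).2 (by linarith)
  set C : ℝ := |α - p - 1| * (a ^ (α - p - 2) + 1) + |p - 1| * (a ^ (p - 2) + 1) with hC_def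
  -- pointwise MVT bound
  have key : ∀ z ∈ Set.Icc a 1, |z ^ (α - p - 1) - z ^ (p - 1)| ≤ C * (1 - z) := by
    intro z hz
    have hz0 : 0 < z := lt_of_lt_of_le ha0 hz.1
    have hderiv : ∀ t ∈ Set.Icc a (1:ℝ), HasDerivWithinAt
        (fun s : ℝ => s ^ (α - p - 1) - s ^ (p - 1))
        ((α - p - 1) * t ^ (α - p - 1 - 1) - (p - 1) * t ^ (p - 1 - 1)) (Set.Icc a 1) t := by
      intro t ht
      have ht0 : t ≠ 0 := (lt_of_lt_of_le ha0 ht.1).ne'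
      exact ((Real.hasDerivAt_rpow_const (Or.inl ht0)).sub
        (Real.hasDerivAt_rpow_const (Or.inl ht0))).hasDerivWithinAt
    have hbound : ∀ t ∈ Set.Icc a (1:ℝ),
        ‖(α - p - 1) * t ^ (α - p - 1 - 1) - (p - 1) * t ^ (p - 1 - 1)‖ ≤ C := by
      intro t ht
      have ht0 : 0 < t := lt_of_lt_of_le ha0 ht.1
      have b1 : t ^ (α - p - 1 - 1) ≤ a ^ (α - p - 2) + 1 := by
        have := rpow_le_bound (r := α - p - 2) ha0 ht.1 ht.2
        simpa [show α - p - 1 - 1 = α - p - 2 by ring] using this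
      have b2 : t ^ (p - 1 - 1) ≤ a ^ (p - 2) + 1 := by
        have := rpow_le_bound (r := p - 2) ha0 ht.1 ht.2
        simpa [show p - 1 - 1 = p - 2 by ring] using this
      have t1 : (0:ℝ) ≤ t ^ (α - p - 1 - 1) := (Real.rpow_pos_of_pos ht0 _).le
      have t2 : (0:ℝ) ≤ t ^ (p - 1 - 1) := (Real.rpow_pos_of_pos ht0 _).le
      calc ‖(α - p - 1) * t ^ (α - p - 1 - 1) - (p - 1) * t ^ (p - 1 - 1)‖
          ≤ |(α - p - 1) * t ^ (α - p - 1 - 1)| + |(p - 1) * t ^ (p - 1 - 1)| := abs_sub _ _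
        _ = |α - p - 1| * t ^ (α - p - 1 - 1) + |p - 1| * t ^ (p - 1 - 1) := by
            rw [abs_mul, abs_mul, abs_of_nonneg t1, abs_of_nonneg t2]
        _ ≤ C := by
            rw [hC_def]
            have n1 : (0:ℝ) ≤ |α - p - 1| := abs_nonneg _
            have n2 : (0:ℝ) ≤ |p - 1| := abs_nonneg _
            exact add_le_add (mul_le_mul_of_nonneg_left b1 n1) (mul_le_mul_of_nonneg_left b2 n2)
    have := Convex.norm_image_sub_le_of_norm_hasDerivWithin_le hderiv hbound
      (convex_Icc a 1) hz (Set.right_mem_Icc.2 (le_trans hz.1 hz.2))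
    have h1 : ((1:ℝ)) ^ (α - p - 1) - (1:ℝ) ^ (p - 1) = 0 := by
      rw [Real.one_rpow, Real.one_rpow]; ring
    rw [Real.norm_eq_abs] at this
    calc |z ^ (α - p - 1) - z ^ (p - 1)|
        = |((1:ℝ) ^ (α - p - 1) - (1:ℝ) ^ (p - 1)) - (z ^ (α - p - 1) - z ^ (p - 1))| := by
          rw [h1, zero_sub, abs_neg]
      _ ≤ C * ‖(1:ℝ) - z‖ := this
      _ = C * (1 - z) := by rw [Real.norm_eq_abs, abs_of_nonneg (by linarith [hz.2])]
  -- dominating function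
  have hdom : IntegrableOn (fun z : ℝ => C * ((1 - z) ^ (1 - α))) (Set.Ioo a 1) := by
    have h1 : IntervalIntegrable (fun t : ℝ => t ^ (1 - α)) volume 0 (1 - a) :=
      intervalIntegral.intervalIntegrable_rpow' (by linarith)
    have h2 := (h1.comp_sub_left 1).const_mul C
    rw [show (1:ℝ) - 0 = 1 by ring, show (1:ℝ) - (1 - a) = a by ring] at h2
    have h3 := h2.symm
    rw [intervalIntegrable_iff_integrableOn_Ioo_of_le ha1.le] at h3
    exact h3
  -- continuity / measurability
  have hcont : ContinuousOn (fun z : ℝ => (z ^ (α - p - 1) - z ^ (p - 1)) / (1 - z) ^ α)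
      (Set.Ioo a 1) := by
    intro z hz
    have hz0 : z ≠ 0 := (lt_of_lt_of_le ha0 hz.1.le).ne'
    have hz1 : (1:ℝ) - z ≠ 0 := by have := hz.2; intro h; linarith [sub_eq_zero.mp h]
    apply ContinuousWithinAt.div
    · exact (((Real.continuousAt_rpow_const z _ (Or.inl hz0)).sub
        (Real.continuousAt_rpow_const z _ (Or.inl hz0)))).continuousWithinAt
    · exact ((Real.continuousAt_rpow_const (1 - z) α (Or.inl hz1)).comp
        (by fun_prop)).continuousWithinAt
    · exact (Real.rpow_pos_of_pos (by cases hz; linarith) α).ne'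
  apply Integrable.mono' hdom (hcont.aestronglyMeasurable measurableSet_Ioo)
  · filter_upwards [ae_restrict_mem measurableSet_Ioo] with z hz
    have hz1 : (0:ℝ) < 1 - z := by cases hz; linarith
    have hd : (0:ℝ) < (1 - z) ^ α := Real.rpow_pos_of_pos hz1 α
    rw [Real.norm_eq_abs, abs_div, abs_of_nonneg hd.le]
    have hkey := key z ⟨hz.1.le, hz.2.le⟩
    calc |z ^ (α - p - 1) - z ^ (p - 1)| / (1 - z) ^ α
        ≤ (C * (1 - z)) / (1 - z) ^ α := by gcongr
      _ = C * ((1 - z) ^ (1 - α)) := by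
          rw [Real.rpow_sub hz1, Real.rpow_one, mul_div_assoc]

lemma int_g2 {α p x : ℝ} (hα1 : 0 < α) (hp : 0 < p) (hx0 : 0 < x) :
    IntegrableOn (fun z : ℝ => z ^ (p - 1) / (1 - z) ^ α) (Set.Ioo 0 (x/(x+1))) := by
  set a := x/(x+1) with ha_def
  have hx1 : (0:ℝ) < x + 1 := by linarith
  have ha0 : 0 < a := div_pos hx0 hx1
  have ha1 : a < 1 := (div_lt_one hx1).2 (by linarith)
  have hdom : IntegrableOn (fun z : ℝ => ((1 - a) ^ α)⁻¹ * z ^ (p - 1)) (Set.Ioo 0 a) := by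
    have h1 : IntervalIntegrable (fun t : ℝ => t ^ (p - 1)) volume 0 a :=
      intervalIntegral.intervalIntegrable_rpow' (by linarith)
    have h2 := h1.const_mul ((1 - a) ^ α)⁻¹
    rwa [intervalIntegrable_iff_integrableOn_Ioo_of_le ha0.le] at h2
  have hcont : ContinuousOn (fun z : ℝ => z ^ (p - 1) / (1 - z) ^ α) (Set.Ioo 0 a) := by
    intro z hz
    have hz0 : z ≠ 0 := hz.1.ne'
    have hz1 : (1:ℝ) - z ≠ 0 := by have := lt_trans hz.2 ha1; intro h; linarith [sub_eq_zero.mp h]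
    apply ContinuousWithinAt.div
    · exact (Real.continuousAt_rpow_const z _ (Or.inl hz0)).continuousWithinAt
    · exact ((Real.continuousAt_rpow_const (1 - z) α (Or.inl hz1)).comp
        (by fun_prop)).continuousWithinAt
    · exact (Real.rpow_pos_of_pos (by linarith [lt_trans hz.2 ha1]) α).ne'
  apply Integrable.mono' hdom (hcont.aestronglyMeasurable measurableSet_Ioo)
  · filter_upwards [ae_restrict_mem measurableSet_Ioo] with z hz
    have hz1 : (0:ℝ) < 1 - z := by linarith [lt_trans hz.2 ha1]
    have hza : (0:ℝ) < 1 - a := by linarith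
    have hd : (0:ℝ) < (1 - z) ^ α := Real.rpow_pos_of_pos hz1 α
    have hda : (0:ℝ) < (1 - a) ^ α := Real.rpow_pos_of_pos hza α
    have hnum : (0:ℝ) ≤ z ^ (p - 1) := (Real.rpow_pos_of_pos hz.1 _).le
    rw [Real.norm_eq_abs, abs_div, abs_of_nonneg hd.le, abs_of_nonneg hnum]
    have hle : (1 - a) ^ α ≤ (1 - z) ^ α := Real.rpow_le_rpow hza.le (by linarith [hz.2]) hα1.le
    rw [div_eq_mul_inv, mul_comm]
    exact mul_le_mul_of_nonneg_right (inv_anti₀ hda hle) hnum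


lemma rpow_calc1 {x z α p : ℝ} (hx : 0 < x) (hz : 0 < z) (hz1 : z < 1) :
    (x * (z^2)⁻¹) * ((x/z)^(p-1) * (x*(1-z)/z)^(-α)) = x^(p-α) * (z^(α-p-1) * (1-z)^(-α)) := by
  have h1z : (0:ℝ) < 1 - z := by linarith
  rw [Real.div_rpow hx.le hz.le, show x*(1-z)/z = x*((1-z)/z) by ring,
    Real.mul_rpow hx.le (by positivity), Real.div_rpow h1z.le hz.le,
    ← Real.rpow_natCast z 2]
  rw [div_eq_mul_inv, div_eq_mul_inv, ← Real.rpow_neg hz.le,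
    ← Real.rpow_neg hz.le, ← Real.rpow_neg hz.le]
  have ex : x^(p-α) = x * (x^(p-1) * x^(-α)) := by
    have h : p - α = 1 + (p-1) + -α := by ring
    rw [h, Real.rpow_add hx, Real.rpow_add hx, Real.rpow_one, mul_assoc]
  have ez : z^(α-p-1) = z^(-((2:ℕ):ℝ)) * z^(-(p-1)) * z^(-(-α)) := by
    have h : α - p - 1 = -((2:ℕ):ℝ) + -(p-1) + -(-α) := by push_cast; ring
    rw [h, Real.rpow_add hz, Real.rpow_add hz]
  rw [ex, ez]; ring

lemma rpow_calc2 {x z α p : ℝ} (hx : 0 < x) (hz : 0 < z) (hz1 : z < 1) :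
    x * ((x*z)^(p-1) * (x*(1-z))^(-α)) = x^(p-α) * (z^(p-1) * (1-z)^(-α)) := by
  have h1z : (0:ℝ) < 1 - z := by linarith
  rw [Real.mul_rpow hx.le hz.le, Real.mul_rpow hx.le h1z.le]
  have ex : x^(p-α) = x * (x^(p-1) * x^(-α)) := by
    have h : p - α = 1 + (p-1) + -α := by ring
    rw [h, Real.rpow_add hx, Real.rpow_add hx, Real.rpow_one, mul_assoc]
  rw [ex]; ring

lemma subA1 {α p x δ : ℝ} (hx0 : 0 < x) (hδ0 : 0 < δ) (hδ1 : δ < 1) :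
    ∫ y in Set.Ioo δ 1, (x+y)^(p-1) * y^(-α) =
      ∫ z in Set.Ioo (x/(x+1)) (x/(x+δ)), x^(p-α) * (z^(α-p-1) * (1-z)^(-α)) := by
  have hx1 : (0:ℝ) < x + 1 := by linarith
  have hxδ : (0:ℝ) < x + δ := by linarith
  set a := x/(x+1) with ha_def
  set b := x/(x+δ) with hb_def
  have ha0 : 0 < a := div_pos hx0 hx1
  have hb1 : b < 1 := (div_lt_one hxδ).2 (by linarith)
  have hab : a < b := div_lt_div_of_pos_left hx0 hxδ (by linarith)
  have hder : ∀ z ∈ Set.Ioo a b, HasDerivWithinAt (fun z : ℝ => x/z - x)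
      (x * -(z^2)⁻¹) (Set.Ioo a b) z := by
    intro z hz
    have hz0 : z ≠ 0 := (lt_trans ha0 hz.1).ne'
    have h := ((hasDerivAt_inv hz0).const_mul x).sub_const x
    have heq : (fun z : ℝ => x * z⁻¹ - x) = fun z : ℝ => x/z - x := by
      funext t; rw [div_eq_mul_inv]
    rw [heq] at h
    exact h.hasDerivWithinAt
  have hinj : Set.InjOn (fun z : ℝ => x/z - x) (Set.Ioo a b) := by
    intro z1 h1 z2 h2 h
    have hz1 : z1 ≠ 0 := (lt_trans ha0 h1.1).ne'
    have hz2 : z2 ≠ 0 := (lt_trans ha0 h2.1).ne'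
    have : x / z1 = x / z2 := by dsimp at h; linarith
    rw [div_eq_div_iff hz1 hz2] at this
    exact mul_left_cancel₀ hx0.ne' (by linarith)
  have himg : (fun z : ℝ => x/z - x) '' (Set.Ioo a b) = Set.Ioo δ 1 := by
    ext y
    simp only [Set.mem_image, Set.mem_Ioo]
    constructor
    · rintro ⟨z, ⟨hza, hzb⟩, rfl⟩
      have hz0 : 0 < z := lt_trans ha0 hza
      have h1 : z * (x + δ) < x := (lt_div_iff₀ hxδ).mp hzb
      have h2 : x < z * (x + 1) := (div_lt_iff₀ hx1).mp hza
      constructor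
      · have : δ + x < x / z := (lt_div_iff₀ hz0).mpr (by nlinarith)
        linarith
      · have : x / z < 1 + x := (div_lt_iff₀ hz0).mpr (by nlinarith)
        linarith
    · rintro ⟨hy1, hy2⟩
      have hxy : (0:ℝ) < x + y := by linarith
      refine ⟨x/(x+y), ⟨?_, ?_⟩, ?_⟩
      · exact div_lt_div_of_pos_left hx0 hxy (by linarith)
      · exact div_lt_div_of_pos_left hx0 hxδ (by linarith)
      · field_simp; ring
  calc ∫ y in Set.Ioo δ 1, (x+y)^(p-1) * y^(-α)
      = ∫ y in (fun z : ℝ => x/z - x) '' (Set.Ioo a b), (x+y)^(p-1) * y^(-α) := by rw [himg]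
    _ = ∫ z in Set.Ioo a b, |x * -(z^2)⁻¹| • ((x+(x/z-x))^(p-1) * ((x/z-x))^(-α)) :=
        integral_image_eq_integral_abs_deriv_smul measurableSet_Ioo hder hinj _
    _ = ∫ z in Set.Ioo a b, x^(p-α) * (z^(α-p-1) * (1-z)^(-α)) := by
        apply setIntegral_congr_fun measurableSet_Ioo
        intro z hz
        dsimp only
        have hz0 : 0 < z := lt_trans ha0 hz.1
        have hz1 : z < 1 := lt_trans hz.2 hb1
        have habs : |x * -(z^2)⁻¹| = x * (z^2)⁻¹ := by
          rw [abs_mul, abs_of_pos hx0, abs_neg, abs_inv, abs_of_pos (pow_pos hz0 2)]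
        have he1 : x + (x/z - x) = x/z := by ring
        have he2 : x/z - x = x*(1-z)/z := by field_simp
        rw [smul_eq_mul, habs, he1, he2]
        exact rpow_calc1 hx0 hz0 hz1

lemma subA2 {α p x δ : ℝ} (hx0 : 0 < x) (hδ0 : 0 < δ) (hδx : δ < x) :
    ∫ y in Set.Ioo δ x, (x-y)^(p-1) * y^(-α) =
      ∫ z in Set.Ioo 0 (1 - δ/x), x^(p-α) * (z^(p-1) * (1-z)^(-α)) := by
  set c := 1 - δ/x with hc_def
  have hc0 : 0 < c := by
    have : δ/x < 1 := (div_lt_one hx0).2 hδx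
    rw [hc_def]; linarith
  have hc1 : c < 1 := by
    have : 0 < δ/x := div_pos hδ0 hx0
    rw [hc_def]; linarith
  have hder : ∀ z ∈ Set.Ioo (0:ℝ) c, HasDerivWithinAt (fun z : ℝ => x - x*z)
      (-(x*1)) (Set.Ioo (0:ℝ) c) z := by
    intro z hz
    exact (((hasDerivAt_id z).const_mul x).const_sub x).hasDerivWithinAt
  have hinj : Set.InjOn (fun z : ℝ => x - x*z) (Set.Ioo (0:ℝ) c) := by
    intro z1 _ z2 _ h
    dsimp at h
    have : x * z1 = x * z2 := by linarith
    exact mul_left_cancel₀ hx0.ne' this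
  have himg : (fun z : ℝ => x - x*z) '' (Set.Ioo (0:ℝ) c) = Set.Ioo δ x := by
    ext y
    simp only [Set.mem_image, Set.mem_Ioo]
    constructor
    · rintro ⟨z, ⟨hz0, hzc⟩, rfl⟩
      constructor
      · have : x * z < x * c := by nlinarith
        have hxc : x * c = x - δ := by rw [hc_def, mul_sub, mul_one, mul_div_assoc', mul_div_cancel_left₀ δ hx0.ne']
        nlinarith
      · nlinarith
    · rintro ⟨hy1, hy2⟩
      refine ⟨(x-y)/x, ⟨div_pos (by linarith) hx0, ?_⟩, by field_simp; ring⟩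
      have hxc : x * c = x - δ := by rw [hc_def, mul_sub, mul_one, mul_div_assoc', mul_div_cancel_left₀ δ hx0.ne']
      rw [div_lt_iff₀ hx0]
      nlinarith
  calc ∫ y in Set.Ioo δ x, (x-y)^(p-1) * y^(-α)
      = ∫ y in (fun z : ℝ => x - x*z) '' (Set.Ioo (0:ℝ) c), (x-y)^(p-1) * y^(-α) := by rw [himg]
    _ = ∫ z in Set.Ioo (0:ℝ) c, |(-(x*1))| • ((x-(x-x*z))^(p-1) * ((x-x*z))^(-α)) :=
        integral_image_eq_integral_abs_deriv_smul measurableSet_Ioo hder hinj _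
    _ = ∫ z in Set.Ioo (0:ℝ) c, x^(p-α) * (z^(p-1) * (1-z)^(-α)) := by
        apply setIntegral_congr_fun measurableSet_Ioo
        intro z hz
        dsimp only
        have hz1 : z < 1 := lt_trans hz.2 hc1
        have habs : |(-(x*1))| = x := by rw [abs_neg, mul_one, abs_of_pos hx0]
        have he1 : x - (x - x*z) = x*z := by ring
        have he2 : x - x*z = x*(1-z) := by ring
        rw [smul_eq_mul, habs, he1, he2]
        exact rpow_calc2 hx0 hz.1 hz1


noncomputable def psiF (p x u : ℝ) : ℝ := max (x+u) 0 ^ p + max (x-u) 0 ^ p - 2*x^p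

noncomputable def HF (α p x u : ℝ) : ℝ := -(psiF p x u) * u^(-α)/α

lemma cont_wfun {p : ℝ} (hp : 0 < p) : Continuous (fun t : ℝ => max t 0 ^ p) := by
  rw [continuous_iff_continuousAt]
  intro t
  exact ((continuous_id.max continuous_const).continuousAt).rpow_const (Or.inr hp.le)

lemma cont_psiF {p x : ℝ} (hp : 0 < p) : Continuous (psiF p x) := by
  unfold psiF
  exact (((cont_wfun hp).comp (continuous_const.add continuous_id)).add
    ((cont_wfun hp).comp (continuous_const.sub continuous_id))).sub continuous_const

lemma hasDerivAt_psiF {p x u : ℝ} (hp : 0 < p) (hu1 : -x < u) (hu2 : u < x) :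
    HasDerivAt (psiF p x) (p*(x+u)^(p-1) - p*(x-u)^(p-1)) u := by
  have hxu : (0:ℝ) < x + u := by linarith
  have hxu' : (0:ℝ) < x - u := by linarith
  have h1 : HasDerivAt (fun u : ℝ => (x+u)^p) (p*(x+u)^(p-1)*1) u :=
    (Real.hasDerivAt_rpow_const (Or.inl hxu.ne')).comp u ((hasDerivAt_id u).const_add x)
  have h2 : HasDerivAt (fun u : ℝ => (x-u)^p) (p*(x-u)^(p-1)*(-1)) u :=
    (Real.hasDerivAt_rpow_const (Or.inl hxu'.ne')).comp u ((hasDerivAt_id u).const_sub x)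
  have h := (h1.add h2).sub_const (2*x^p)
  have heq : psiF p x =ᶠ[nhds u] (fun u : ℝ => (x+u)^p + (x-u)^p - 2*x^p) := by
    filter_upwards [isOpen_Ioo.mem_nhds (show u ∈ Set.Ioo (-x) x from ⟨hu1, hu2⟩)] with s hs
    have h1 : max (x+s) 0 = x+s := max_eq_left (by rcases hs with ⟨l, r⟩; linarith)
    have h2 : max (x-s) 0 = x-s := max_eq_left (by rcases hs with ⟨l, r⟩; linarith)
    unfold psiF; rw [h1, h2]
  have := h.congr_of_eventuallyEq heq
  rw [show p*(x+u)^(p-1) - p*(x-u)^(p-1) = p*(x+u)^(p-1)*1 + p*(x-u)^(p-1)*(-1) by ring]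
  exact this

lemma hasDerivAt_psiF_right {p x u : ℝ} (hp : 0 < p) (hx0 : 0 < x) (hu : x < u) :
    HasDerivAt (psiF p x) (p*(x+u)^(p-1)) u := by
  have hxu : (0:ℝ) < x + u := by linarith
  have h1 : HasDerivAt (fun u : ℝ => (x+u)^p) (p*(x+u)^(p-1)*1) u :=
    (Real.hasDerivAt_rpow_const (Or.inl hxu.ne')).comp u ((hasDerivAt_id u).const_add x)
  have h := h1.sub_const (2*x^p)
  have heq : psiF p x =ᶠ[nhds u] (fun u : ℝ => (x+u)^p - 2*x^p) := by
    filter_upwards [isOpen_Ioi.mem_nhds (show u ∈ Set.Ioi x from hu)] with s hs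
    have h1 : max (x+s) 0 = x+s := max_eq_left (by simp only [Set.mem_Ioi] at hs; linarith)
    have h2 : max (x-s) 0 = 0 := max_eq_right (by simp only [Set.mem_Ioi] at hs; linarith)
    unfold psiF; rw [h1, h2, Real.zero_rpow hp.ne']; ring
  have := h.congr_of_eventuallyEq heq
  rw [show p*(x+u)^(p-1) = p*(x+u)^(p-1)*1 by ring]
  exact this

lemma ftc_piece {α p x δ : ℝ} (hα1 : 0 < α) (hp : 0 < p) (hx0 : 0 < x) (hx1 : x < 1)
    (hδ0 : 0 < δ) (hδx : δ < x) :
    ∫ u in Set.Ioo δ 1, psiF p x u * u^(-(1+α)) =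
      HF α p x 1 - HF α p x δ
      + (p/α) * (∫ u in Set.Ioo δ 1, (x+u)^(p-1) * u^(-α))
      - (p/α) * (∫ u in Set.Ioo δ x, (x-u)^(p-1) * u^(-α)) := by
  set q1 : ℝ → ℝ := fun u => (x+u)^(p-1) * u^(-α) with hq1_def
  set q2 : ℝ → ℝ := fun u => (x-u)^(p-1) * u^(-α) with hq2_def
  set Ψ : ℝ → ℝ := fun u => psiF p x u * u^(-(1+α)) with hΨ_def
  -- continuity facts
  have contOn_q1 : ∀ {lo hi : ℝ}, 0 < lo → ContinuousOn q1 (Set.Icc lo hi) := by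
    intro lo hi hlo u hu
    have hu0 : 0 < u := lt_of_lt_of_le hlo hu.1
    have hxu : (0:ℝ) < x + u := by linarith
    exact ((((continuous_const.add continuous_id).continuousAt).rpow_const (Or.inl hxu.ne')).mul
      (continuousAt_id.rpow_const (Or.inl hu0.ne'))).continuousWithinAt
  have contOn_Ψ : ∀ {lo hi : ℝ}, 0 < lo → ContinuousOn Ψ (Set.Icc lo hi) := by
    intro lo hi hlo u hu
    have hu0 : 0 < u := lt_of_lt_of_le hlo hu.1
    exact ((cont_psiF hp).continuousAt.mul
      (continuousAt_id.rpow_const (Or.inl hu0.ne'))).continuousWithinAt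
  have contOn_HF : ∀ {lo hi : ℝ}, 0 < lo → ContinuousOn (HF α p x) (Set.Icc lo hi) := by
    intro lo hi hlo u hu
    have hu0 : 0 < u := lt_of_lt_of_le hlo hu.1
    exact (((cont_psiF hp).continuousAt.neg.mul
      (continuousAt_id.rpow_const (Or.inl hu0.ne'))).div_const α).continuousWithinAt
  -- interval integrability
  have ii_q1_δx : IntervalIntegrable q1 volume δ x :=
    ContinuousOn.intervalIntegrable (by rw [Set.uIcc_of_le hδx.le]; exact contOn_q1 hδ0)
  have ii_q1_x1 : IntervalIntegrable q1 volume x 1 :=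
    ContinuousOn.intervalIntegrable (by rw [Set.uIcc_of_le hx1.le]; exact contOn_q1 hx0)
  have ii_Ψ_δx : IntervalIntegrable Ψ volume δ x :=
    ContinuousOn.intervalIntegrable (by rw [Set.uIcc_of_le hδx.le]; exact contOn_Ψ hδ0)
  have ii_Ψ_x1 : IntervalIntegrable Ψ volume x 1 :=
    ContinuousOn.intervalIntegrable (by rw [Set.uIcc_of_le hx1.le]; exact contOn_Ψ hx0)
  have ii_q2_δx : IntervalIntegrable q2 volume δ x := by
    have base : IntervalIntegrable (fun u : ℝ => u ^ (p-1)) volume 0 (x - δ) :=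
      intervalIntegral.intervalIntegrable_rpow' (by linarith)
    have comp := base.comp_sub_left x
    rw [show x - 0 = x by ring, show x - (x - δ) = δ by ring] at comp
    have := comp.symm.mul_continuousOn (g := fun u : ℝ => u^(-α)) ?_
    · exact this
    · rw [Set.uIcc_of_le hδx.le]
      intro u hu
      have hu0 : 0 < u := lt_of_lt_of_le hδ0 hu.1
      exact (Real.continuousAt_rpow_const u (-α) (Or.inl hu0.ne')).continuousWithinAt
  -- FTC on [δ, x]
  have ftc1 : ∫ u in δ..x, (Ψ u - (p/α) * q1 u + (p/α) * q2 u) =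
      HF α p x x - HF α p x δ := by
    apply intervalIntegral.integral_eq_sub_of_hasDeriv_right_of_le hδx.le
      (contOn_HF hδ0)
    · intro u hu
      have hu0 : 0 < u := lt_trans hδ0 hu.1
      have hψ := hasDerivAt_psiF (x := x) hp (by linarith) hu.2
      have hr : HasDerivAt (fun u : ℝ => u^(-α)) (-α * u^(-α-1)) u :=
        Real.hasDerivAt_rpow_const (Or.inl hu0.ne')
      have h := (hψ.neg.mul hr).div_const α
      have key : (-(p*(x+u)^(p-1) - p*(x-u)^(p-1)) * u^(-α) +
          -(psiF p x u) * (-α * u^(-α-1)))/α =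
          Ψ u - (p/α) * q1 u + (p/α) * q2 u := by
        rw [hΨ_def, hq1_def, hq2_def]
        dsimp only
        rw [show -(1+α) = -α-1 by ring]
        field_simp
        ring
      rw [← key]
      exact h.hasDerivWithinAt
    · exact (ii_Ψ_δx.sub (ii_q1_δx.const_mul (p/α))).add (ii_q2_δx.const_mul (p/α))
  -- FTC on [x, 1]
  have ftc2 : ∫ u in x..1, (Ψ u - (p/α) * q1 u) = HF α p x 1 - HF α p x x := by
    apply intervalIntegral.integral_eq_sub_of_hasDeriv_right_of_le hx1.le
      (contOn_HF hx0)
    · intro u hu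
      have hu0 : 0 < u := lt_trans hx0 hu.1
      have hψ := hasDerivAt_psiF_right (x := x) hp hx0 hu.1
      have hr : HasDerivAt (fun u : ℝ => u^(-α)) (-α * u^(-α-1)) u :=
        Real.hasDerivAt_rpow_const (Or.inl hu0.ne')
      have h := (hψ.neg.mul hr).div_const α
      have key : (-(p*(x+u)^(p-1)) * u^(-α) + -(psiF p x u) * (-α * u^(-α-1)))/α =
          Ψ u - (p/α) * q1 u := by
        rw [hΨ_def, hq1_def]
        dsimp only
        rw [show -(1+α) = -α-1 by ring]
        field_simp
        ring
      rw [← key]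
      exact h.hasDerivWithinAt
    · exact ii_Ψ_x1.sub (ii_q1_x1.const_mul (p/α))
  -- unfold linearity
  have e1 : ∫ u in δ..x, Ψ u =
      HF α p x x - HF α p x δ + (p/α) * (∫ u in δ..x, q1 u) - (p/α) * (∫ u in δ..x, q2 u) := by
    have expand : ∫ u in δ..x, (Ψ u - (p/α) * q1 u + (p/α) * q2 u) =
        (∫ u in δ..x, Ψ u) - (p/α) * (∫ u in δ..x, q1 u) + (p/α) * (∫ u in δ..x, q2 u) := by
      rw [intervalIntegral.integral_add (ii_Ψ_δx.sub (ii_q1_δx.const_mul (p/α)))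
        (ii_q2_δx.const_mul (p/α)),
        intervalIntegral.integral_sub ii_Ψ_δx (ii_q1_δx.const_mul (p/α)),
        intervalIntegral.integral_const_mul, intervalIntegral.integral_const_mul]
    rw [expand] at ftc1
    linarith
  have e2 : ∫ u in x..1, Ψ u = HF α p x 1 - HF α p x x + (p/α) * (∫ u in x..1, q1 u) := by
    have expand : ∫ u in x..1, (Ψ u - (p/α) * q1 u) =
        (∫ u in x..1, Ψ u) - (p/α) * (∫ u in x..1, q1 u) := by
      rw [intervalIntegral.integral_sub ii_Ψ_x1 (ii_q1_x1.const_mul (p/α)),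
        intervalIntegral.integral_const_mul]
    rw [expand] at ftc2
    linarith
  have eΨ : ∫ u in δ..1, Ψ u = (∫ u in δ..x, Ψ u) + ∫ u in x..1, Ψ u :=
    (intervalIntegral.integral_add_adjacent_intervals ii_Ψ_δx ii_Ψ_x1).symm
  have eq1 : ∫ u in δ..1, q1 u = (∫ u in δ..x, q1 u) + ∫ u in x..1, q1 u :=
    (intervalIntegral.integral_add_adjacent_intervals ii_q1_δx ii_q1_x1).symm
  have final : ∫ u in δ..1, Ψ u =
      HF α p x 1 - HF α p x δ + (p/α) * (∫ u in δ..1, q1 u) - (p/α) * (∫ u in δ..x, q2 u) := by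
    rw [eΨ, e1, e2, eq1]; ring
  have hδ1 : δ ≤ 1 := le_trans hδx.le hx1.le
  rw [intervalIntegral.integral_of_le hδ1, integral_Ioc_eq_integral_Ioo] at final
  rw [intervalIntegral.integral_of_le hδ1, integral_Ioc_eq_integral_Ioo] at final
  rw [intervalIntegral.integral_of_le hδx.le, integral_Ioc_eq_integral_Ioo] at final
  exact final

lemma rpow_le_sum_bound {lo hi t r : ℝ} (hlo : 0 < lo) (h1 : lo ≤ t) (h2 : t ≤ hi) :
    t^r ≤ lo^r + hi^r := by
  have ht : 0 < t := lt_of_lt_of_le hlo h1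
  have hhi : 0 < hi := lt_of_lt_of_le ht h2
  rcases le_or_gt r 0 with hr | hr
  · have := Real.rpow_le_rpow_of_nonpos hlo h1 hr
    linarith [(Real.rpow_pos_of_pos hhi r).le]
  · have := Real.rpow_le_rpow ht.le h2 hr.le
    linarith [(Real.rpow_pos_of_pos hlo r).le]

lemma psi_quad {p x : ℝ} (hp : 0 < p) (hx0 : 0 < x) :
    ∃ L : ℝ, 0 ≤ L ∧ ∀ u ∈ Set.Icc (0:ℝ) (x/(x+1)), |psiF p x u| ≤ L * u^2 := by
  have hx1 : (0:ℝ) < x + 1 := by linarith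
  set a := x/(x+1) with ha_def
  have ha0 : 0 < a := div_pos hx0 hx1
  have ha1 : a < 1 := (div_lt_one hx1).2 (by linarith)
  have hax : a < x := by
    rw [ha_def, div_lt_iff₀ hx1]; nlinarith
  have hxa : 0 < x - a := by linarith
  set L0 : ℝ := |p| * (|p-1| * ((x-a)^(p-2) + (x+1)^(p-2))) with hL0_def
  have hL0 : 0 ≤ L0 := by
    apply mul_nonneg (abs_nonneg _) (mul_nonneg (abs_nonneg _) _)
    have := (Real.rpow_pos_of_pos hxa (p-2)).le
    have := (Real.rpow_pos_of_pos hx1 (p-2)).le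
    linarith
  -- step 1: derivative bound
  have step1 : ∀ s ∈ Set.Icc (0:ℝ) a, |p*(x+s)^(p-1) - p*(x-s)^(p-1)| ≤ (2*L0)*s := by
    intro s hs
    have hder : ∀ t ∈ Set.Icc (x-a) (x+1), HasDerivWithinAt (fun t : ℝ => p * t^(p-1))
        (p * ((p-1) * t^(p-1-1))) (Set.Icc (x-a) (x+1)) t := by
      intro t ht
      have ht0 : t ≠ 0 := (lt_of_lt_of_le hxa ht.1).ne'
      exact ((Real.hasDerivAt_rpow_const (Or.inl ht0)).const_mul p).hasDerivWithinAt
    have hbound : ∀ t ∈ Set.Icc (x-a) (x+1), ‖p * ((p-1) * t^(p-1-1))‖ ≤ L0 := by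
      intro t ht
      have ht0 : 0 < t := lt_of_lt_of_le hxa ht.1
      rw [Real.norm_eq_abs, abs_mul, abs_mul, abs_of_nonneg (Real.rpow_pos_of_pos ht0 _).le]
      rw [hL0_def, show p-1-1 = p-2 by ring]
      have := rpow_le_sum_bound (r := p-2) hxa ht.1 ht.2
      exact mul_le_mul_of_nonneg_left (mul_le_mul_of_nonneg_left this (abs_nonneg _)) (abs_nonneg _)
    have hmem1 : x + s ∈ Set.Icc (x-a) (x+1) := ⟨by linarith [hs.1], by linarith [hs.2, ha1.le]⟩
    have hmem2 : x - s ∈ Set.Icc (x-a) (x+1) := ⟨by linarith [hs.2], by linarith [hs.1]⟩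
    have := Convex.norm_image_sub_le_of_norm_hasDerivWithin_le hder hbound
      (convex_Icc _ _) hmem2 hmem1
    rw [Real.norm_eq_abs, Real.norm_eq_abs] at this
    have heq : (x + s) - (x - s) = 2*s := by ring
    rw [heq] at this
    calc |p*(x+s)^(p-1) - p*(x-s)^(p-1)| ≤ L0 * |2*s| := this
      _ = (2*L0)*s := by rw [abs_of_nonneg (by linarith [hs.1])]; ring
  refine ⟨2*L0, by linarith, ?_⟩
  intro u hu
  have hu0 : 0 ≤ u := hu.1
  have hua : u ≤ a := hu.2
  -- step 2 : MVT for psiF on [0, u]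
  have hder : ∀ s ∈ Set.Icc (0:ℝ) u, HasDerivWithinAt (psiF p x)
      (p*(x+s)^(p-1) - p*(x-s)^(p-1)) (Set.Icc 0 u) s := by
    intro s hs
    exact (hasDerivAt_psiF hp (by linarith [hs.1]) (by linarith [hs.2, hua, hax])).hasDerivWithinAt
  have hbound : ∀ s ∈ Set.Icc (0:ℝ) u, ‖p*(x+s)^(p-1) - p*(x-s)^(p-1)‖ ≤ (2*L0)*u := by
    intro s hs
    rw [Real.norm_eq_abs]
    calc |p*(x+s)^(p-1) - p*(x-s)^(p-1)| ≤ (2*L0)*s :=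
          step1 s ⟨hs.1, le_trans hs.2 hua⟩
      _ ≤ (2*L0)*u := mul_le_mul_of_nonneg_left hs.2 (by linarith)
  have := Convex.norm_image_sub_le_of_norm_hasDerivWithin_le hder hbound
    (convex_Icc _ _) (Set.left_mem_Icc.2 hu0) (Set.right_mem_Icc.2 hu0)
  have hψ0 : psiF p x 0 = 0 := by
    unfold psiF
    rw [add_zero, sub_zero, max_eq_left hx0.le]; ring
  rw [hψ0, sub_zero, Real.norm_eq_abs, Real.norm_eq_abs, sub_zero, abs_of_nonneg hu0] at this
  calc |psiF p x u| ≤ 2*L0*u*u := this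
    _ = 2*L0*u^2 := by ring

lemma tendsto_const_rpow {C r : ℝ} (hr : 0 < r) :
    Tendsto (fun δ : ℝ => C * δ^r) (nhdsWithin 0 (Set.Ioi 0)) (nhds 0) := by
  have h := (Real.continuousAt_rpow_const 0 r (Or.inr hr.le)).tendsto
  rw [Real.zero_rpow hr.ne'] at h
  have h2 := (h.mono_left (nhdsWithin_le_nhds (s := Set.Ioi 0))).const_mul C
  simpa using h2

lemma tendsto_HF {α p x : ℝ} (hα1 : 0 < α) (hα2 : α < 2) (hp : 0 < p) (hx0 : 0 < x) :
    Tendsto (fun δ => HF α p x δ) (nhdsWithin 0 (Set.Ioi 0)) (nhds 0) := by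
  obtain ⟨L, hL0, hL⟩ := psi_quad hp hx0
  have hx1 : (0:ℝ) < x + 1 := by linarith
  have ha0 : 0 < x/(x+1) := div_pos hx0 hx1
  apply squeeze_zero_norm' (a := fun δ => (L/α) * δ^(2-α))
  · filter_upwards [Ioo_mem_nhdsGT_of_mem (show (0:ℝ) ∈ Set.Ico 0 (x/(x+1)) from ⟨le_refl _, ha0⟩)]
      with δ hδ
    have hδ0 : 0 < δ := hδ.1
    have hrp : 0 < δ^(-α) := Real.rpow_pos_of_pos hδ0 _
    have hb := hL δ ⟨hδ0.le, hδ.2.le⟩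
    have : ‖HF α p x δ‖ = |psiF p x δ| * δ^(-α)/α := by
      unfold HF
      rw [Real.norm_eq_abs, abs_div, abs_of_pos hα1, abs_mul, abs_neg, abs_of_pos hrp]
    rw [this]
    have step : |psiF p x δ| * δ^(-α)/α ≤ (L * δ^2) * δ^(-α)/α := by
      gcongr
    refine le_trans step (le_of_eq ?_)
    rw [show (2:ℝ)-α = 2+(-α) by ring, Real.rpow_add hδ0,
      show ((2:ℝ):ℝ) = ((2:ℕ):ℝ) by norm_num, Real.rpow_natCast]
    ring
  · exact tendsto_const_rpow (by linarith)

lemma tendsto_cutoff {x a : ℝ} (hx0 : 0 < x) (ha0 : 0 < a) (ha1 : a < 1) {f : ℝ → ℝ}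
    (hf : IntegrableOn f (Set.Ioo a 1)) :
    Tendsto (fun δ => ∫ z in Set.Ioo a (x/(x+δ)), f z) (nhdsWithin 0 (Set.Ioi 0))
      (nhds (∫ z in Set.Ioo a 1, f z)) := by
  have key := MeasureTheory.tendsto_integral_filter_of_dominated_convergence
    (μ := volume.restrict (Set.Ioo a 1)) (l := nhdsWithin (0:ℝ) (Set.Ioi 0))
    (F := fun δ z => (Set.Ioo a (x/(x+δ))).indicator f z) (f := f)
    (bound := fun z => ‖f z‖) ?_ ?_ ?_ ?_
  · apply key.congr'
    filter_upwards [self_mem_nhdsWithin] with δ hδ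
    have hδ0 : (0:ℝ) < δ := hδ
    have hxδ : 0 < x + δ := by linarith
    have hb1 : x/(x+δ) < 1 := (div_lt_one hxδ).2 (by linarith)
    rw [MeasureTheory.setIntegral_indicator measurableSet_Ioo,
      Set.inter_eq_self_of_subset_right (Set.Ioo_subset_Ioo (le_refl _) hb1.le)]
  · filter_upwards with δ
    exact hf.aestronglyMeasurable.indicator measurableSet_Ioo
  · filter_upwards with δ
    filter_upwards with z
    exact norm_indicator_le_norm_self f z
  · exact hf.norm
  · filter_upwards [ae_restrict_mem measurableSet_Ioo] with z hz
    have hz0 : 0 < z := lt_trans ha0 hz.1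
    have hpos : 0 < x/z - x := by
      have : x < x/z := by
        rw [lt_div_iff₀ hz0]; nlinarith [hz.2]
      linarith
    apply tendsto_const_nhds.congr'
    filter_upwards [Ioo_mem_nhdsGT_of_mem (show (0:ℝ) ∈ Set.Ico 0 (x/z - x) from ⟨le_refl _, hpos⟩)]
      with δ hδ
    have hδ0 : 0 < δ := hδ.1
    have hxδ : 0 < x + δ := by linarith
    have hzb : z < x/(x+δ) := by
      rw [lt_div_iff₀ hxδ]
      have h3 : z * δ < z * (x/z - x) := mul_lt_mul_of_pos_left hδ.2 hz0
      have hzx : z * (x/z - x) = x - z*x := by field_simp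
      nlinarith
    rw [Set.indicator_of_mem (Set.mem_Ioo.2 ⟨hz.1, hzb⟩)]

lemma tendsto_R {α p x : ℝ} (hα1 : 0 < α) (hα2 : α < 2) (hp : 0 < p) (hx0 : 0 < x) :
    Tendsto (fun δ => ∫ z in Set.Ioo (1-δ/x) (x/(x+δ)), z^(p-1)/(1-z)^α)
      (nhdsWithin 0 (Set.Ioi 0)) (nhds 0) := by
  have hx1 : (0:ℝ) < x + 1 := by linarith
  set a := x/(x+1) with ha_def
  have ha0 : 0 < a := div_pos hx0 hx1
  have ha1 : a < 1 := (div_lt_one hx1).2 (by linarith)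
  set M : ℝ := a^(p-1) + 1 with hM_def
  have hM0 : 0 ≤ M := by
    have := (Real.rpow_pos_of_pos ha0 (p-1)).le; linarith
  set C : ℝ := M * (x+1)^α / x^2 with hC_def
  have evset := Ioo_mem_nhdsGT_of_mem (show (0:ℝ) ∈ Set.Ico 0 a from ⟨le_refl _, ha0⟩)
  apply squeeze_zero'
  · filter_upwards [evset] with δ hδ
    have hδ0 : 0 < δ := hδ.1
    have hxδ : 0 < x + δ := by linarith
    apply MeasureTheory.setIntegral_nonneg measurableSet_Ioo
    intro z hz
    have hz0 : 0 < z := by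
      have hc0 : 0 < 1 - δ/x := by
        have : δ/x < 1 := (div_lt_one hx0).2 (by
          calc δ < a := hδ.2
            _ < x := by rw [ha_def, div_lt_iff₀ hx1]; nlinarith)
        linarith
      linarith [hz.1]
    have hz1 : z < 1 := lt_trans hz.2 ((div_lt_one hxδ).2 (by linarith))
    exact le_of_lt (div_pos (Real.rpow_pos_of_pos hz0 _) (Real.rpow_pos_of_pos (by linarith) _))
  · filter_upwards [evset] with δ hδ
    have hδ0 : 0 < δ := hδ.1
    have hδa : δ < a := hδ.2
    have hδ1 : δ < 1 := lt_trans hδa ha1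
    have hxδ : 0 < x + δ := by linarith
    have hax : a < x := by rw [ha_def, div_lt_iff₀ hx1]; nlinarith
    set c : ℝ := 1 - δ/x with hc_def
    set b : ℝ := x/(x+δ) with hb_def
    have hb1 : b < 1 := (div_lt_one hxδ).2 (by linarith)
    have hac : a < c := by
      have h1 : δ/x < 1/(x+1) := by
        rw [div_lt_div_iff₀ hx0 hx1]
        rw [ha_def, lt_div_iff₀ hx1] at hδa
        linarith
      have h2 : a = 1 - 1/(x+1) := by rw [ha_def]; field_simp; ring
      rw [hc_def, h2]; linarith
    have hc0 : 0 < c := lt_trans ha0 hac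
    have heq : b - c = δ^2/(x*(x+δ)) := by
      rw [hb_def, hc_def]; field_simp; ring
    have hcb : c ≤ b := by
      rw [← sub_nonneg, heq]; positivity
    set Bd : ℝ := M / (δ/(x+1))^α with hBd_def
    have hBd0 : 0 ≤ Bd := div_nonneg hM0 (Real.rpow_pos_of_pos (by positivity) _).le
    have hptw : ∀ z ∈ Set.Ioo c b, z^(p-1)/(1-z)^α ≤ Bd := by
      intro z hz
      have hza : a ≤ z := le_of_lt (lt_trans hac hz.1)
      have hz1 : z ≤ 1 := le_of_lt (lt_trans hz.2 hb1)
      have hzM : z^(p-1) ≤ M := rpow_le_bound ha0 hza hz1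
      have h1b : 1 - b = δ/(x+δ) := by rw [hb_def]; field_simp; ring
      have hden1 : δ/(x+1) ≤ 1 - z := by
        have e1 : δ/(x+1) ≤ δ/(x+δ) := by
          apply div_le_div_of_nonneg_left hδ0.le hxδ
          linarith
        have e2 : 1 - b < 1 - z := by linarith [hz.2]
        linarith [e1, h1b ▸ e2]
      have hdenpos : (0:ℝ) < δ/(x+1) := by positivity
      have hden : (δ/(x+1))^α ≤ (1-z)^α :=
        Real.rpow_le_rpow hdenpos.le hden1 hα1.le
      rw [hBd_def]
      exact div_le_div₀ hM0 hzM (Real.rpow_pos_of_pos hdenpos _) hden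
    have hint1 : IntegrableOn (fun z : ℝ => z^(p-1)/(1-z)^α) (Set.Ioo c b) := by
      have hcont : ContinuousOn (fun z : ℝ => z^(p-1)/(1-z)^α) (Set.Icc c b) := by
        intro z hz
        have hz0 : 0 < z := lt_of_lt_of_le hc0 hz.1
        have hz1 : 0 < 1 - z := by linarith [le_trans hz.2 hb1.le, lt_of_le_of_lt hz.2 hb1]
        exact ((continuousAt_id.rpow_const (Or.inl hz0.ne')).div
          (((continuous_const.sub continuous_id).continuousAt).rpow_const (Or.inl hz1.ne'))
          (Real.rpow_pos_of_pos hz1 _).ne').continuousWithinAt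
      exact (hcont.integrableOn_compact isCompact_Icc).mono_set Set.Ioo_subset_Icc_self
    have hint2 : IntegrableOn (fun _ : ℝ => Bd) (Set.Ioo c b) :=
      integrableOn_const measure_Ioo_lt_top.ne
    have step1 : (∫ z in Set.Ioo c b, z^(p-1)/(1-z)^α) ≤ ∫ _ in Set.Ioo c b, Bd :=
      setIntegral_mono_on hint1 hint2 measurableSet_Ioo hptw
    have step2 : (∫ _ in Set.Ioo c b, Bd) = (b - c) * Bd := by
      rw [setIntegral_const, measureReal_def, Real.volume_Ioo, ENNReal.toReal_ofReal (by linarith), smul_eq_mul]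
    have hbc_le : b - c ≤ δ^2/x^2 := by
      rw [heq]
      apply div_le_div_of_nonneg_left (sq_nonneg δ) (by positivity)
      nlinarith
    have step3 : (b - c) * Bd ≤ (δ^2/x^2) * Bd := mul_le_mul_of_nonneg_right hbc_le hBd0
    have step4 : (δ^2/x^2) * Bd = C * δ^(2-α) := by
      rw [hBd_def, hC_def, Real.div_rpow hδ0.le hx1.le, Real.rpow_sub hδ0,
        show ((2:ℝ)) = ((2:ℕ):ℝ) from by norm_num, Real.rpow_natCast]
      have hδα : (0:ℝ) < δ^α := Real.rpow_pos_of_pos hδ0 _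
      have hxα : (0:ℝ) < (x+1)^α := Real.rpow_pos_of_pos hx1 _
      field_simp
    calc (∫ z in Set.Ioo c b, z^(p-1)/(1-z)^α) ≤ (b - c) * Bd := step1.trans (le_of_eq step2)
      _ ≤ (δ^2/x^2) * Bd := step3
      _ = C * δ^(2-α) := step4
  · exact tendsto_const_rpow (r := 2-α) (by linarith)

section transfer

noncomputable def eE : EuclideanSpace ℝ (Fin 1) ≃ᵐ ℝ :=
  (MeasurableEquiv.toLp 2 (Fin 1 → ℝ)).symm.trans (MeasurableEquiv.funUnique (Fin 1) ℝ)

lemma eE_symm_apply (t : ℝ) : eE.symm t = EuclideanSpace.single 0 t := by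
  ext j
  fin_cases j
  simp [eE, EuclideanSpace.single_apply, MeasurableEquiv.toLp,
    MeasurableEquiv.funUnique]
  rfl

lemma eE_mp : MeasurePreserving eE.symm volume volume :=
  ((volume_preserving_funUnique (Fin 1) ℝ).comp
    (EuclideanSpace.volume_preserving_symm_measurableEquiv_toLp (Fin 1))).symm eE

lemma single_sub (s t : ℝ) : EuclideanSpace.single (0 : Fin 1) s - EuclideanSpace.single 0 t
    = EuclideanSpace.single 0 (s - t) := by
  ext j
  fin_cases j
  simp [EuclideanSpace.single_apply]

lemma norm_single_sub (s t : ℝ) :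
    ‖EuclideanSpace.single (0 : Fin 1) s - EuclideanSpace.single 0 t‖ = |s - t| := by
  rw [single_sub, EuclideanSpace.norm_single, Real.norm_eq_abs]

lemma wp_single (p t : ℝ) : wp 1 one_pos p (EuclideanSpace.single 0 t) = max t 0 ^ p := by
  unfold wp
  congr 1

lemma transfer (p x r A ε : ℝ) :
    (∫ y in {y : EuclideanSpace ℝ (Fin 1) | ε < ‖y - EuclideanSpace.single 0 x‖ ∧
        ‖y - EuclideanSpace.single 0 x‖ < 1},
      (wp 1 one_pos p y - wp 1 one_pos p (EuclideanSpace.single 0 x)) * A *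
        ‖EuclideanSpace.single 0 x - y‖ ^ r)
    = ∫ t in {t : ℝ | ε < |t - x| ∧ |t - x| < 1},
        (max t 0 ^ p - max x 0 ^ p) * A * |x - t| ^ r := by
  have himg : eE.symm '' {t : ℝ | ε < |t - x| ∧ |t - x| < 1}
      = {y : EuclideanSpace ℝ (Fin 1) | ε < ‖y - EuclideanSpace.single 0 x‖ ∧
          ‖y - EuclideanSpace.single 0 x‖ < 1} := by
    ext y
    simp only [Set.mem_image, Set.mem_setOf_eq]
    constructor
    · rintro ⟨t, ht, rfl⟩
      rw [eE_symm_apply, norm_single_sub]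
      exact ht
    · intro hy
      refine ⟨eE y, ?_, eE.symm_apply_apply y⟩
      have : y = eE.symm (eE y) := (eE.symm_apply_apply y).symm
      rw [this, eE_symm_apply, norm_single_sub] at hy
      exact hy
  rw [← himg, MeasurePreserving.setIntegral_image_emb eE_mp eE.symm.measurableEmbedding]
  apply setIntegral_congr_fun (by
    have : MeasurableSet {t : ℝ | ε < |t - x| ∧ |t - x| < 1} := by
      apply MeasurableSet.inter
      · exact measurableSet_lt measurable_const (measurable_id.sub measurable_const).abs
      · exact measurableSet_lt (measurable_id.sub measurable_const).abs measurable_const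
    exact this)
  intro t _
  dsimp only
  rw [eE_symm_apply t, wp_single, wp_single, norm_single_sub]

end transfer

lemma symmetrize {p x A r : ℝ} (hp : 0 < p) (hx0 : 0 < x) {ε : ℝ}
    (hε0 : 0 < ε) (hε1 : ε < 1) :
    (∫ t in {t : ℝ | ε < |t - x| ∧ |t - x| < 1},
        (max t 0 ^ p - max x 0 ^ p) * A * |x - t| ^ r)
    = ∫ u in Set.Ioo ε 1, psiF p x u * A * u ^ r := by
  set f : ℝ → ℝ := fun t => (max t 0 ^ p - max x 0 ^ p) * A * |x - t| ^ r with hf_def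
  have hset : {t : ℝ | ε < |t - x| ∧ |t - x| < 1}
      = Set.Ioo (x-1) (x-ε) ∪ Set.Ioo (x+ε) (x+1) := by
    ext t
    simp only [Set.mem_setOf_eq, Set.mem_union, Set.mem_Ioo]
    constructor
    · rintro ⟨h1, h2⟩
      rcases le_total t x with h | h
      · rw [abs_of_nonpos (by linarith)] at h1 h2
        left; constructor <;> linarith
      · rw [abs_of_nonneg (by linarith)] at h1 h2
        right; constructor <;> linarith
    · rintro (⟨h1, h2⟩ | ⟨h1, h2⟩)
      · rw [abs_of_nonpos (by linarith)]
        constructor <;> linarith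
      · rw [abs_of_nonneg (by linarith)]
        constructor <;> linarith
  -- continuity away from x
  have hcont : ∀ {lo hi : ℝ}, (x ∉ Set.Icc lo hi) → ContinuousOn f (Set.Icc lo hi) := by
    intro lo hi hx_not t ht
    have hxt : x - t ≠ 0 := by
      intro h
      have hxe : x = t := by linarith
      rw [hxe] at hx_not
      exact hx_not ht
    apply ContinuousWithinAt.mul
    apply ContinuousWithinAt.mul
    · exact (((cont_wfun hp).continuousAt).sub continuousAt_const).continuousWithinAt
    · exact continuousWithinAt_const
    · exact (((continuous_const.sub continuous_id).abs.continuousAt).rpow_const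
        (Or.inl (by simpa using hxt))).continuousWithinAt
  have hint_right : IntegrableOn f (Set.Ioo (x+ε) (x+1)) := by
    have h := (hcont (lo := x+ε) (hi := x+1) (by
      intro h; exact absurd h.1 (by linarith))).integrableOn_compact (μ := volume) isCompact_Icc
    exact h.mono_set Set.Ioo_subset_Icc_self
  have hint_left : IntegrableOn f (Set.Ioo (x-1) (x-ε)) := by
    have h := (hcont (lo := x-1) (hi := x-ε) (by
      intro h; exact absurd h.2 (by linarith))).integrableOn_compact (μ := volume) isCompact_Icc
    exact h.mono_set Set.Ioo_subset_Icc_self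
  have hdisj : Disjoint (Set.Ioo (x-1) (x-ε)) (Set.Ioo (x+ε) (x+1)) := by
    rw [Set.disjoint_left]
    rintro t ⟨_, h2⟩ ⟨h3, _⟩
    linarith
  -- change of variables on each piece
  have hder_plus : ∀ u ∈ Set.Ioo ε 1, HasDerivWithinAt (fun u : ℝ => x + u)
      (1:ℝ) (Set.Ioo ε 1) u := fun u _ => ((hasDerivAt_id u).const_add x).hasDerivWithinAt
  have hder_minus : ∀ u ∈ Set.Ioo ε 1, HasDerivWithinAt (fun u : ℝ => x - u)
      (-1:ℝ) (Set.Ioo ε 1) u := fun u _ => ((hasDerivAt_id u).const_sub x).hasDerivWithinAt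
  have hinj_plus : Set.InjOn (fun u : ℝ => x + u) (Set.Ioo ε 1) := fun u _ v _ h => by
    dsimp at h; linarith
  have hinj_minus : Set.InjOn (fun u : ℝ => x - u) (Set.Ioo ε 1) := fun u _ v _ h => by
    dsimp at h; linarith
  have himg_plus : (fun u : ℝ => x + u) '' Set.Ioo ε 1 = Set.Ioo (x+ε) (x+1) := by
    rw [Set.image_const_add_Ioo]
  have himg_minus : (fun u : ℝ => x - u) '' Set.Ioo ε 1 = Set.Ioo (x-1) (x-ε) := by
    rw [Set.image_const_sub_Ioo]
  have hplus : ∫ t in Set.Ioo (x+ε) (x+1), f t = ∫ u in Set.Ioo ε 1, |(1:ℝ)| • f (x+u) := by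
    rw [← himg_plus]
    exact integral_image_eq_integral_abs_deriv_smul measurableSet_Ioo hder_plus hinj_plus f
  have hminus : ∫ t in Set.Ioo (x-1) (x-ε), f t = ∫ u in Set.Ioo ε 1, |(-1:ℝ)| • f (x-u) := by
    rw [← himg_minus]
    exact integral_image_eq_integral_abs_deriv_smul measurableSet_Ioo hder_minus hinj_minus f
  have hint_plus' : IntegrableOn (fun u : ℝ => |(1:ℝ)| • f (x+u)) (Set.Ioo ε 1) := by
    rw [← MeasureTheory.integrableOn_image_iff_integrableOn_abs_deriv_smul
      measurableSet_Ioo hder_plus hinj_plus f, himg_plus]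
    exact hint_right
  have hint_minus' : IntegrableOn (fun u : ℝ => |(-1:ℝ)| • f (x-u)) (Set.Ioo ε 1) := by
    rw [← MeasureTheory.integrableOn_image_iff_integrableOn_abs_deriv_smul
      measurableSet_Ioo hder_minus hinj_minus f, himg_minus]
    exact hint_left
  calc (∫ t in {t : ℝ | ε < |t - x| ∧ |t - x| < 1}, f t)
      = ∫ t in Set.Ioo (x-1) (x-ε) ∪ Set.Ioo (x+ε) (x+1), f t := by rw [hset]
    _ = (∫ t in Set.Ioo (x-1) (x-ε), f t) + ∫ t in Set.Ioo (x+ε) (x+1), f t :=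
        setIntegral_union hdisj measurableSet_Ioo hint_left hint_right
    _ = (∫ u in Set.Ioo ε 1, |(-1:ℝ)| • f (x-u)) + ∫ u in Set.Ioo ε 1, |(1:ℝ)| • f (x+u) := by
        rw [hplus, hminus]
    _ = ∫ u in Set.Ioo ε 1, (|(-1:ℝ)| • f (x-u) + |(1:ℝ)| • f (x+u)) :=
        (integral_add hint_minus' hint_plus').symm
    _ = ∫ u in Set.Ioo ε 1, psiF p x u * A * u ^ r := by
        apply setIntegral_congr_fun measurableSet_Ioo
        intro u hu
        have hu0 : 0 < u := lt_trans hε0 hu.1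
        have e1 : |x - (x+u)| = u := by rw [show x - (x+u) = -u by ring, abs_neg, abs_of_pos hu0]
        have e2 : |x - (x-u)| = u := by rw [show x - (x-u) = u by ring, abs_of_pos hu0]
        have e3 : max x 0 = x := max_eq_left hx0.le
        rw [hf_def]
        dsimp only
        rw [e1, e2, e3, abs_neg, abs_one]
        simp only [smul_eq_mul, one_mul]
        unfold psiF
        ring


theorem statement13 (α p : ℝ) (hα1 : 0 < α) (hα2 : α < 2) (hp : 0 < p)
    (x : ℝ) (hx : x ∈ Set.Ioo (0 : ℝ) 1) :
    IntegrableOn (fun z : ℝ => (z ^ (α - p - 1) - z ^ (p - 1)) / (1 - z) ^ α)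
      (Set.Ioo (x / (x + 1)) 1) ∧
    IntegrableOn (fun z : ℝ => z ^ (p - 1) / (1 - z) ^ α) (Set.Ioo 0 (x / (x + 1))) ∧
    truncFracLapPV 1 α 1 (wp 1 one_pos p) (EuclideanSpace.single 0 x)
      (frakA 1 α / α *
        (2 * x ^ p - (x + 1) ^ p + p * x ^ (p - α) *
          ((∫ z in Set.Ioo (x / (x + 1)) 1, (z ^ (α - p - 1) - z ^ (p - 1)) / (1 - z) ^ α) -
            ∫ z in Set.Ioo (0 : ℝ) (x / (x + 1)), z ^ (p - 1) / (1 - z) ^ α))) := by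
  obtain ⟨hx0, hx1⟩ := hx
  have hx1' : (0:ℝ) < x + 1 := by linarith
  have ha0 : 0 < x/(x+1) := div_pos hx0 hx1'
  have ha1 : x/(x+1) < 1 := (div_lt_one hx1').2 (by linarith)
  have hax : x/(x+1) < x := by rw [div_lt_iff₀ hx1']; nlinarith
  refine ⟨int_g1 hα1 hα2 hp hx0, int_g2 hα1 hp hx0, ?_⟩
  unfold truncFracLapPV
  simp only [Nat.cast_one]
  have key : ∀ ε ∈ Set.Ioo (0:ℝ) (x/(x+1)),
      (∫ y in {y : EuclideanSpace ℝ (Fin 1) | ε < ‖y - EuclideanSpace.single 0 x‖ ∧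
          ‖y - EuclideanSpace.single 0 x‖ < 1},
        (wp 1 one_pos p y - wp 1 one_pos p (EuclideanSpace.single 0 x)) * frakA 1 α *
          ‖EuclideanSpace.single 0 x - y‖ ^ (-(1+α)))
      = frakA 1 α * ((HF α p x 1 - HF α p x ε) + (p/α) * (x^(p-α) *
          (((∫ z in Set.Ioo (x/(x+1)) (x/(x+ε)), (z^(α-p-1) - z^(p-1))/(1-z)^α)
           + (∫ z in Set.Ioo (1-ε/x) (x/(x+ε)), z^(p-1)/(1-z)^α))
           - ∫ z in Set.Ioo (0:ℝ) (x/(x+1)), z^(p-1)/(1-z)^α))) := by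
    intro ε hε
    have hε0 : 0 < ε := hε.1
    have hεa : ε < x/(x+1) := hε.2
    have hε1 : ε < 1 := lt_trans hεa ha1
    have hεx : ε < x := lt_trans hεa hax
    have hxε : 0 < x + ε := by linarith
    have hb1 : x/(x+ε) < 1 := (div_lt_one hxε).2 (by linarith)
    have hab : x/(x+1) < x/(x+ε) := div_lt_div_of_pos_left hx0 hxε (by linarith)
    have hc0 : 0 < 1 - ε/x := by
      have : ε/x < 1 := (div_lt_one hx0).2 hεx
      linarith
    have hc1 : 1 - ε/x < 1 := by
      have : 0 < ε/x := div_pos hε0 hx0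
      linarith
    have hac : x/(x+1) < 1 - ε/x := by
      have h1 : ε/x < 1/(x+1) := by
        rw [div_lt_div_iff₀ hx0 hx1']
        rw [lt_div_iff₀ hx1'] at hεa
        linarith
      have h2 : x/(x+1) = 1 - 1/(x+1) := by field_simp; ring
      rw [h2]; linarith
    have hcb : 1 - ε/x ≤ x/(x+ε) := by
      have heq : x/(x+ε) - (1 - ε/x) = ε^2/(x*(x+ε)) := by field_simp; ring
      have h0 : (0:ℝ) ≤ ε^2/(x*(x+ε)) := by positivity
      linarith
    -- integrability pieces
    have hg1i : IntegrableOn (fun z : ℝ => (z^(α-p-1) - z^(p-1))/(1-z)^α)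
        (Set.Ioo (x/(x+1)) (x/(x+ε))) :=
      (int_g1 hα1 hα2 hp hx0).mono_set (Set.Ioo_subset_Ioo le_rfl hb1.le)
    have hg2i_ab : IntegrableOn (fun z : ℝ => z^(p-1)/(1-z)^α)
        (Set.Ioo (x/(x+1)) (x/(x+ε))) :=
      (int_g2_Icc ha0 hb1).mono_set Set.Ioo_subset_Icc_self
    have hg2i_ac : IntegrableOn (fun z : ℝ => z^(p-1)/(1-z)^α)
        (Set.Ioo (x/(x+1)) (1-ε/x)) :=
      (int_g2_Icc ha0 hc1).mono_set Set.Ioo_subset_Icc_self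
    have hg2i_ac' : IntegrableOn (fun z : ℝ => z^(p-1)/(1-z)^α)
        (Set.Ico (x/(x+1)) (1-ε/x)) :=
      (int_g2_Icc ha0 hc1).mono_set Set.Ico_subset_Icc_self
    have hg2i_cb : IntegrableOn (fun z : ℝ => z^(p-1)/(1-z)^α)
        (Set.Ico (1-ε/x) (x/(x+ε))) :=
      (int_g2_Icc hc0 hb1).mono_set Set.Ico_subset_Icc_self
    -- I1 computation
    have hI1 : (∫ u in Set.Ioo ε 1, (x+u)^(p-1) * u^(-α))
        = x^(p-α) * ((∫ z in Set.Ioo (x/(x+1)) (x/(x+ε)), (z^(α-p-1) - z^(p-1))/(1-z)^α)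
          + (∫ z in Set.Ioo (x/(x+1)) (x/(x+ε)), z^(p-1)/(1-z)^α)) := by
      rw [subA1 hx0 hε0 hε1]
      calc ∫ z in Set.Ioo (x/(x+1)) (x/(x+ε)), x^(p-α) * (z^(α-p-1) * (1-z)^(-α))
          = ∫ z in Set.Ioo (x/(x+1)) (x/(x+ε)),
              x^(p-α) * ((z^(α-p-1) - z^(p-1))/(1-z)^α + z^(p-1)/(1-z)^α) := by
            apply setIntegral_congr_fun measurableSet_Ioo
            intro z hz
            dsimp only
            have hz1 : 0 < 1 - z := by linarith [lt_trans hz.2 hb1]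
            congr 1
            rw [← add_div, sub_add_cancel, Real.rpow_neg hz1.le, div_eq_mul_inv]
        _ = x^(p-α) * ∫ z in Set.Ioo (x/(x+1)) (x/(x+ε)),
              ((z^(α-p-1) - z^(p-1))/(1-z)^α + z^(p-1)/(1-z)^α) := integral_const_mul _ _
        _ = x^(p-α) * ((∫ z in Set.Ioo (x/(x+1)) (x/(x+ε)), (z^(α-p-1) - z^(p-1))/(1-z)^α)
              + (∫ z in Set.Ioo (x/(x+1)) (x/(x+ε)), z^(p-1)/(1-z)^α)) := by
            rw [integral_add hg1i hg2i_ab]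
    -- I2 computation
    have hI2 : (∫ u in Set.Ioo ε x, (x-u)^(p-1) * u^(-α))
        = x^(p-α) * ((∫ z in Set.Ioo (0:ℝ) (x/(x+1)), z^(p-1)/(1-z)^α)
          + (∫ z in Set.Ioo (x/(x+1)) (1-ε/x), z^(p-1)/(1-z)^α)) := by
      rw [subA2 hx0 hε0 hεx]
      have step1 : ∫ z in Set.Ioo (0:ℝ) (1-ε/x), x^(p-α) * (z^(p-1) * (1-z)^(-α))
          = x^(p-α) * ∫ z in Set.Ioo (0:ℝ) (1-ε/x), z^(p-1)/(1-z)^α := by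
        rw [← integral_const_mul]
        apply setIntegral_congr_fun measurableSet_Ioo
        intro z hz
        dsimp only
        have hz1 : 0 < 1 - z := by linarith [lt_trans hz.2 hc1]
        congr 1
        rw [Real.rpow_neg hz1.le, div_eq_mul_inv]
      rw [step1]
      congr 1
      have hsplit : Set.Ioo (0:ℝ) (x/(x+1)) ∪ Set.Ico (x/(x+1)) (1-ε/x)
          = Set.Ioo (0:ℝ) (1-ε/x) := Set.Ioo_union_Ico_eq_Ioo ha0 hac.le
      rw [← hsplit, setIntegral_union ?_ measurableSet_Ico (int_g2 hα1 hp hx0) hg2i_ac',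
        integral_Ico_eq_integral_Ioo]
      rw [Set.disjoint_left]
      rintro t ⟨_, h2⟩ ⟨h3, _⟩
      exact absurd h3 (not_le.2 h2)
    -- split Ioo a b = Ioo a c ∪ Ico c b for g2
    have hsplit2 : (∫ z in Set.Ioo (x/(x+1)) (x/(x+ε)), z^(p-1)/(1-z)^α)
        = (∫ z in Set.Ioo (x/(x+1)) (1-ε/x), z^(p-1)/(1-z)^α)
          + ∫ z in Set.Ioo (1-ε/x) (x/(x+ε)), z^(p-1)/(1-z)^α := by
      have hu : Set.Ioo (x/(x+1)) (1-ε/x) ∪ Set.Ico (1-ε/x) (x/(x+ε))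
          = Set.Ioo (x/(x+1)) (x/(x+ε)) := Set.Ioo_union_Ico_eq_Ioo hac hcb
      rw [← hu, setIntegral_union ?_ measurableSet_Ico hg2i_ac hg2i_cb,
        integral_Ico_eq_integral_Ioo]
      rw [Set.disjoint_left]
      rintro t ⟨_, h2⟩ ⟨h3, _⟩
      exact absurd h3 (not_le.2 h2)
    calc (∫ y in {y : EuclideanSpace ℝ (Fin 1) | ε < ‖y - EuclideanSpace.single 0 x‖ ∧
            ‖y - EuclideanSpace.single 0 x‖ < 1},
          (wp 1 one_pos p y - wp 1 one_pos p (EuclideanSpace.single 0 x)) * frakA 1 α *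
            ‖EuclideanSpace.single 0 x - y‖ ^ (-(1+α)))
        = ∫ t in {t : ℝ | ε < |t - x| ∧ |t - x| < 1},
            (max t 0 ^ p - max x 0 ^ p) * frakA 1 α * |x - t| ^ (-(1+α)) :=
          transfer p x (-(1+α)) (frakA 1 α) ε
      _ = ∫ u in Set.Ioo ε 1, psiF p x u * frakA 1 α * u ^ (-(1+α)) :=
          symmetrize hp hx0 hε0 hε1
      _ = ∫ u in Set.Ioo ε 1, frakA 1 α * (psiF p x u * u ^ (-(1+α))) := by
          apply setIntegral_congr_fun measurableSet_Ioo
          intro u _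
          ring
      _ = frakA 1 α * ∫ u in Set.Ioo ε 1, psiF p x u * u ^ (-(1+α)) := integral_const_mul _ _
      _ = frakA 1 α * (HF α p x 1 - HF α p x ε
            + (p/α) * (∫ u in Set.Ioo ε 1, (x+u)^(p-1) * u^(-α))
            - (p/α) * (∫ u in Set.Ioo ε x, (x-u)^(p-1) * u^(-α))) := by
          rw [ftc_piece hα1 hp hx0 hx1 hε0 hεx]
      _ = frakA 1 α * ((HF α p x 1 - HF α p x ε) + (p/α) * (x^(p-α) *
            (((∫ z in Set.Ioo (x/(x+1)) (x/(x+ε)), (z^(α-p-1) - z^(p-1))/(1-z)^α)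
             + (∫ z in Set.Ioo (1-ε/x) (x/(x+ε)), z^(p-1)/(1-z)^α))
             - ∫ z in Set.Ioo (0:ℝ) (x/(x+1)), z^(p-1)/(1-z)^α))) := by
          rw [hI1, hI2, hsplit2]
          ring
  -- value of HF at 1
  have hHF1 : HF α p x 1 = (2*x^p - (x+1)^p)/α := by
    unfold HF psiF
    rw [max_eq_left (by linarith : (0:ℝ) ≤ x+1), max_eq_right (by linarith : x-1 ≤ 0),
      Real.zero_rpow hp.ne', Real.one_rpow]
    ring
  -- the limit of the explicit expression
  have t1 : Tendsto (fun ε : ℝ => HF α p x 1 - HF α p x ε)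
      (nhdsWithin 0 (Set.Ioi 0)) (nhds (HF α p x 1 - 0)) :=
    tendsto_const_nhds.sub (tendsto_HF hα1 hα2 hp hx0)
  have t2 : Tendsto (fun ε : ℝ =>
        (∫ z in Set.Ioo (x/(x+1)) (x/(x+ε)), (z^(α-p-1) - z^(p-1))/(1-z)^α)
        + (∫ z in Set.Ioo (1-ε/x) (x/(x+ε)), z^(p-1)/(1-z)^α))
      (nhdsWithin 0 (Set.Ioi 0))
      (nhds ((∫ z in Set.Ioo (x/(x+1)) 1, (z^(α-p-1) - z^(p-1))/(1-z)^α) + 0)) :=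
    (tendsto_cutoff hx0 ha0 ha1 (int_g1 hα1 hα2 hp hx0)).add (tendsto_R hα1 hα2 hp hx0)
  have t3 := t2.sub_const (∫ z in Set.Ioo (0:ℝ) (x/(x+1)), z^(p-1)/(1-z)^α)
  have t4 := t3.const_mul (x^(p-α))
  have t5 := t4.const_mul (p/α)
  have t6 := (t1.add t5).const_mul (frakA 1 α)
  have hval : frakA 1 α * ((HF α p x 1 - 0) + (p/α) * (x^(p-α) *
        (((∫ z in Set.Ioo (x/(x+1)) 1, (z^(α-p-1) - z^(p-1))/(1-z)^α) + 0)
          - ∫ z in Set.Ioo (0:ℝ) (x/(x+1)), z^(p-1)/(1-z)^α)))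
      = frakA 1 α / α * (2 * x ^ p - (x + 1) ^ p + p * x ^ (p - α) *
        ((∫ z in Set.Ioo (x/(x+1)) 1, (z ^ (α - p - 1) - z ^ (p - 1)) / (1 - z) ^ α) -
          ∫ z in Set.Ioo (0:ℝ) (x/(x+1)), z ^ (p - 1) / (1 - z) ^ α)) := by
    rw [hHF1]
    ring
  rw [← hval]
  apply Tendsto.congr' ?_ t6
  filter_upwards [Ioo_mem_nhdsGT_of_mem
    (show (0:ℝ) ∈ Set.Ico 0 (x/(x+1)) from ⟨le_rfl, ha0⟩)] with ε hε
  exact (key ε hε).symm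
end
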